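/- arXiv:2505.22529 — 6 statements merged into one kernel-verified Lean document; each statement's English description precedes it below -/
import Mathlib

section
/- For any F ∈ ℝ^N with 0 < F_i < 1/α for all i, the entropy dissipation is nonpositive: ⟨log(F/Ψ_α(F)), Q^α(F)⟩ ≤ 0, where log(F/Ψ_α(F)) denotes the vector with components log(F_i/Ψ_α(F_i)). -/
open Real Finset Filter Set

noncomputable def Psi (α y : ℝ) : ℝ :=
  (1 - α * y) ^ α * (1 + (1 - α) * y) ^ (1 - α)

noncomputable def Qop {N : ℕ} (α : ℝ) (Γ : Fin N → Fin N → Fin N → Fin N → ℝ)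
    (F : Fin N → ℝ) : Fin N → ℝ := fun i =>
  ∑ j, ∑ k, ∑ l, Γ i j k l *
    (F k * F l * Psi α (F i) * Psi α (F j) - F i * F j * Psi α (F k) * Psi α (F l))

def dotN {N : ℕ} (u v : Fin N → ℝ) : ℝ := ∑ i, u i * v i

def GammaOK {N d : ℕ} (p : Fin N → Fin d → ℝ)
    (Γ : Fin N → Fin N → Fin N → Fin N → ℝ) : Prop :=
  (∀ i j k l, 0 ≤ Γ i j k l) ∧
  (∀ i j k l, Γ i j k l = Γ j i k l) ∧
  (∀ i j k l, Γ i j k l = Γ k l i j) ∧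
  (∀ i j k l, Γ i j k l ≠ 0 →
    (∀ m, p i m + p j m = p k m + p l m) ∧
    (∑ m, (p i m) ^ 2) + (∑ m, (p j m) ^ 2) = (∑ m, (p k m) ^ 2) + (∑ m, (p l m) ^ 2))

def IsCollInv {N : ℕ} (Γ : Fin N → Fin N → Fin N → Fin N → ℝ) (φ : Fin N → ℝ) : Prop :=
  ∀ i j k l, Γ i j k l ≠ 0 → φ i + φ j = φ k + φ l

def IsNormal {N d : ℕ} (p : Fin N → Fin d → ℝ)
    (Γ : Fin N → Fin N → Fin N → Fin N → ℝ) : Prop :=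
  ∀ φ : Fin N → ℝ, IsCollInv Γ φ →
    ∃ (a c : ℝ) (b : Fin d → ℝ), ∀ i, φ i = a + (∑ m, b m * p i m) + c * ∑ m, (p i m) ^ 2

def IsEquilib {N d : ℕ} (α : ℝ) (p : Fin N → Fin d → ℝ) (P : Fin N → ℝ) : Prop :=
  (∀ i, 0 < P i ∧ P i < 1 / α) ∧
  ∃ (K : ℝ) (b : Fin d → ℝ) (c : ℝ), 0 < K ∧
    ∀ i, P i / Psi α (P i) = K * Real.exp (-(∑ m, b m * p i m) - c * ∑ m, (p i m) ^ 2)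

noncomputable def muF (α y : ℝ) : ℝ :=
  y * Real.log y + (1 - α * y) * Real.log (1 - α * y)
    - (1 + (1 - α) * y) * Real.log (1 + (1 - α) * y)

noncomputable def Rfun {N : ℕ} (α : ℝ) (P : Fin N → ℝ) (i : Fin N) : ℝ :=
  P i * (1 - α * P i) * (1 + (1 - α) * P i)

noncomputable def Pcoef {N : ℕ} (α : ℝ) (P : Fin N → ℝ) (i j k l : Fin N) : ℝ :=
  P i * P j * Psi α (P k) * Psi α (P l) / Real.sqrt (Rfun α P i)

noncomputable def Lop {N : ℕ} (α : ℝ) (Γ : Fin N → Fin N → Fin N → Fin N → ℝ)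
    (P : Fin N → ℝ) (f : Fin N → ℝ) : Fin N → ℝ := fun i =>
  ∑ j, ∑ k, ∑ l, Γ i j k l / Real.sqrt (Rfun α P i) *
    (Pcoef α P i j k l * f i + Pcoef α P j i k l * f j
      - Pcoef α P k l i j * f k - Pcoef α P l k i j * f l)

lemma log_ineq {x y : ℝ} (hx : 0 < x) (hy : 0 < y) :
    (x - y) * (Real.log y - Real.log x) ≤ 0 := by
  rcases le_total x y with h | h
  · have := Real.log_le_log hx h
    exact mul_nonpos_of_nonpos_of_nonneg (by linarith) (by linarith)
  · have := Real.log_le_log hy h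
    exact mul_nonpos_of_nonneg_of_nonpos (by linarith) (by linarith)

lemma aux_nonpos {ι : Type*} [Fintype ι] (σ : ι ≃ ι)
    (G T : ι → ι → ℝ) (L : ι → ℝ)
    (hG1 : ∀ p q, G p q = G q p) (hG2 : ∀ p q, G (σ p) q = G p q)
    (hT1 : ∀ p q, T q p = -T p q) (hT2 : ∀ p q, T (σ p) q = T p q)
    (hkey : ∀ p q, G p q * T p q * (L p + L (σ p) - L q - L (σ q)) ≤ 0) :
    ∑ p, ∑ q, G p q * T p q * L p ≤ 0 := by
  set A := ∑ p, ∑ q, G p q * T p q * L p with hA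
  have e1 : A = ∑ p, ∑ q, G p q * T p q * L (σ p) := by
    rw [hA, ← Equiv.sum_comp σ (fun p => ∑ q, G p q * T p q * L p)]
    exact Finset.sum_congr rfl fun p _ => Finset.sum_congr rfl fun q _ => by
      rw [hG2, hT2]
  have e2 : A = -∑ p, ∑ q, G p q * T p q * L q := by
    rw [hA, Finset.sum_comm, ← Finset.sum_neg_distrib]
    exact Finset.sum_congr rfl fun p _ => by
      rw [← Finset.sum_neg_distrib]
      exact Finset.sum_congr rfl fun q _ => by rw [hG1, hT1]; ring
  have e3 : A = -∑ p, ∑ q, G p q * T p q * L (σ q) := by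
    rw [e2, neg_inj]
    refine Finset.sum_congr rfl fun p _ => ?_
    rw [← Equiv.sum_comp σ (fun q => G p q * T p q * L q)]
    refine Finset.sum_congr rfl fun q _ => ?_
    have hg : G p (σ q) = G p q := by rw [hG1, hG2, hG1]
    have ht : T p (σ q) = T p q := by rw [hT1, hT2, hT1]; ring
    rw [hg, ht]
  have hsum : ∑ p, ∑ q, G p q * T p q * (L p + L (σ p) - L q - L (σ q)) = 4 * A := by
    have : ∀ p q : ι, G p q * T p q * (L p + L (σ p) - L q - L (σ q))
        = G p q * T p q * L p + G p q * T p q * L (σ p)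
          - G p q * T p q * L q - G p q * T p q * L (σ q) := fun p q => by ring
    simp only [this, Finset.sum_sub_distrib, Finset.sum_add_distrib]
    nlinarith [e1, e2, e3]
  have hle : ∑ p, ∑ q, G p q * T p q * (L p + L (σ p) - L q - L (σ q)) ≤ 0 :=
    Finset.sum_nonpos fun p _ => Finset.sum_nonpos fun q _ => hkey p q
  linarith [hsum ▸ hle]


/-- the entropy dissipation is nonpositive. -/
theorem stmt1 {N d : ℕ} (hN : 0 < N) (hd : 0 < d)
    (α : ℝ) (hα0 : 0 < α) (hα1 : α < 1)
    (p : Fin N → Fin d → ℝ) (Γ : Fin N → Fin N → Fin N → Fin N → ℝ)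
    (hΓ : GammaOK p Γ)
    (F : Fin N → ℝ) (hF : ∀ i, 0 < F i ∧ F i < 1 / α) :
    dotN (fun i => Real.log (F i / Psi α (F i))) (Qop α Γ F) ≤ 0 := by
  obtain ⟨hΓ0, hΓs, hΓp, -⟩ := hΓ
  have hFpos : ∀ i, 0 < F i := fun i => (hF i).1
  have hΨpos : ∀ i, 0 < Psi α (F i) := by
    intro i
    have h1 : 0 < 1 - α * F i := by
      have h2 := (hF i).2
      have h3 : α * F i < α * (1 / α) := by
        exact mul_lt_mul_of_pos_left h2 hα0
      rw [mul_one_div_cancel hα0.ne'] at h3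
      linarith
    have h2 : 0 < 1 + (1 - α) * F i := by nlinarith [hFpos i]
    exact mul_pos (Real.rpow_pos_of_pos h1 _) (Real.rpow_pos_of_pos h2 _)
  have key := aux_nonpos (ι := Fin N × Fin N) (Equiv.prodComm _ _)
    (fun x y => Γ x.1 x.2 y.1 y.2)
    (fun x y => F y.1 * F y.2 * (Psi α (F x.1) * Psi α (F x.2))
       - F x.1 * F x.2 * (Psi α (F y.1) * Psi α (F y.2)))
    (fun x => Real.log (F x.1 / Psi α (F x.1)))
    (fun x y => hΓp x.1 x.2 y.1 y.2)
    (fun x y => hΓs x.2 x.1 y.1 y.2)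
    (fun x y => by ring)
    (fun x y => by dsimp only [Equiv.prodComm_apply, Prod.swap]; ring)
    ?_
  · refine le_trans (le_of_eq ?_) key
    simp only [dotN, Qop, Finset.mul_sum, Fintype.sum_prod_type]
    exact Finset.sum_congr rfl fun i _ => Finset.sum_congr rfl fun j _ =>
      Finset.sum_congr rfl fun k _ => Finset.sum_congr rfl fun l _ => by ring
  · rintro ⟨i, j⟩ ⟨k, l⟩
    dsimp only [Equiv.prodComm_apply, Prod.swap]
    set x := F k * F l * (Psi α (F i) * Psi α (F j)) with hx
    set y := F i * F j * (Psi α (F k) * Psi α (F l)) with hy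
    have hxpos : 0 < x := mul_pos (mul_pos (hFpos k) (hFpos l)) (mul_pos (hΨpos i) (hΨpos j))
    have hypos : 0 < y := mul_pos (mul_pos (hFpos i) (hFpos j)) (mul_pos (hΨpos k) (hΨpos l))
    have hlog : Real.log (F i / Psi α (F i)) + Real.log (F j / Psi α (F j))
        - Real.log (F k / Psi α (F k)) - Real.log (F l / Psi α (F l))
        = Real.log y - Real.log x := by
      rw [hx, hy, Real.log_mul (mul_ne_zero (hFpos i).ne' (hFpos j).ne')
          (mul_ne_zero (hΨpos k).ne' (hΨpos l).ne'),
        Real.log_mul (mul_ne_zero (hFpos k).ne' (hFpos l).ne')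
          (mul_ne_zero (hΨpos i).ne' (hΨpos j).ne'),
        Real.log_mul (hFpos i).ne' (hFpos j).ne',
        Real.log_mul (hFpos k).ne' (hFpos l).ne',
        Real.log_mul (hΨpos i).ne' (hΨpos j).ne',
        Real.log_mul (hΨpos k).ne' (hΨpos l).ne',
        Real.log_div (hFpos i).ne' (hΨpos i).ne',
        Real.log_div (hFpos j).ne' (hΨpos j).ne',
        Real.log_div (hFpos k).ne' (hΨpos k).ne',
        Real.log_div (hFpos l).ne' (hΨpos l).ne']
      ring
    rw [hlog, mul_assoc]
    exact mul_nonpos_of_nonneg_of_nonpos (hΓ0 i j k l) (log_ineq hxpos hypos)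
end

section
/- Assume the model is normal. Then for any F ∈ ℝ^N with 0 < F_i < 1/α for all i, one has Q^α(F) = 0 if and only if F is an equilibrium distribution, i.e., there exist K > 0, b ∈ ℝ^d and c ∈ ℝ such that F_i/Ψ_α(F_i) = K e^{−b·p_i − c|p_i|²} for all i ∈ {1,…,N}. -/
open Real Finset Filter Set

lemma Psi_pos' (α y : ℝ) (hα0 : 0 < α) (hy0 : 0 < y) (hy1 : y < 1 / α) :
    0 < Psi α y := by
  have h1 : 0 < 1 - α * y := by
    have h : α * y < α * (1 / α) := mul_lt_mul_of_pos_left hy1 hα0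
    rw [mul_one_div, div_self hα0.ne'] at h
    linarith
  have h2 : 0 < 1 + (1 - α) * y := by nlinarith
  exact mul_pos (Real.rpow_pos_of_pos h1 α) (Real.rpow_pos_of_pos h2 (1 - α))

lemma log_diff_nonpos (u v : ℝ) (hu : 0 < u) (hv : 0 < v) :
    (u - v) * (Real.log v - Real.log u) ≤ 0 := by
  rcases lt_trichotomy u v with h | h | h
  · have := Real.log_lt_log hu h
    nlinarith
  · simp [h]
  · have := Real.log_lt_log hv h
    nlinarith

lemma log_diff_eq_zero (u v : ℝ) (hu : 0 < u) (hv : 0 < v)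
    (h : (u - v) * (Real.log v - Real.log u) = 0) : u = v := by
  rcases lt_trichotomy u v with h' | h' | h'
  · have := Real.log_lt_log hu h'
    nlinarith
  · exact h'
  · have := Real.log_lt_log hv h'
    nlinarith

lemma keyA (Fi Fj Fk Fl Pi Pj Pk Pl : ℝ) (hi : Pi ≠ 0) (hj : Pj ≠ 0) (hk : Pk ≠ 0) (hl : Pl ≠ 0) :
    Fk * Fl * Pi * Pj - Fi * Fj * Pk * Pl
      = Pi * Pj * Pk * Pl * ((Fk / Pk) * (Fl / Pl) - (Fi / Pi) * (Fj / Pj)) := by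
  field_simp

lemma sum4_eq {N : ℕ} (f : Fin N → Fin N → Fin N → Fin N → ℝ) :
    (∑ i, ∑ j, ∑ k, ∑ l, f i j k l)
      = ∑ x : Fin N × Fin N × Fin N × Fin N, f x.1 x.2.1 x.2.2.1 x.2.2.2 := by
  simp [Fintype.sum_prod_type]

lemma sum_swap12 {N : ℕ} (g : Fin N × Fin N × Fin N × Fin N → ℝ) :
    (∑ x : Fin N × Fin N × Fin N × Fin N, g x)
      = ∑ x : Fin N × Fin N × Fin N × Fin N, g (x.2.1, x.1, x.2.2) := by
  have hσ : Function.Bijective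
      (fun x : Fin N × Fin N × Fin N × Fin N => ((x.2.1, x.1, x.2.2) : Fin N × Fin N × Fin N × Fin N)) := by
    have hi : Function.Involutive
        (fun x : Fin N × Fin N × Fin N × Fin N => ((x.2.1, x.1, x.2.2) : Fin N × Fin N × Fin N × Fin N)) :=
      fun ⟨i, j, k, l⟩ => rfl
    exact hi.bijective
  exact (Fintype.sum_bijective _ hσ _ _ (fun x => rfl)).symm

lemma sum_swappair {N : ℕ} (g : Fin N × Fin N × Fin N × Fin N → ℝ) :
    (∑ x : Fin N × Fin N × Fin N × Fin N, g x)
      = ∑ x : Fin N × Fin N × Fin N × Fin N, g (x.2.2.1, x.2.2.2, x.1, x.2.1) := by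
  have hσ : Function.Bijective
      (fun x : Fin N × Fin N × Fin N × Fin N => ((x.2.2.1, x.2.2.2, x.1, x.2.1) : Fin N × Fin N × Fin N × Fin N)) := by
    have hi : Function.Involutive
        (fun x : Fin N × Fin N × Fin N × Fin N => ((x.2.2.1, x.2.2.2, x.1, x.2.1) : Fin N × Fin N × Fin N × Fin N)) :=
      fun ⟨i, j, k, l⟩ => rfl
    exact hi.bijective
  exact (Fintype.sum_bijective _ hσ _ _ (fun x => rfl)).symm

noncomputable def hfun {N : ℕ} (Γ : Fin N → Fin N → Fin N → Fin N → ℝ) (a g : Fin N → ℝ)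
    (x : Fin N × Fin N × Fin N × Fin N) : ℝ :=
  Γ x.1 x.2.1 x.2.2.1 x.2.2.2 *
    (a x.1 * a x.2.1 * a x.2.2.1 * a x.2.2.2 *
      ((g x.2.2.1) * (g x.2.2.2) - (g x.1) * (g x.2.1)))

lemma hfun_swap12 {N : ℕ} (Γ : Fin N → Fin N → Fin N → Fin N → ℝ) (a g : Fin N → ℝ)
    (hs1 : ∀ i j k l, Γ i j k l = Γ j i k l) (i j k l : Fin N) :
    hfun Γ a g (j, i, k, l) = hfun Γ a g (i, j, k, l) := by
  simp only [hfun]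
  rw [← hs1 i j k l]
  ring

lemma hfun_swappair {N : ℕ} (Γ : Fin N → Fin N → Fin N → Fin N → ℝ) (a g : Fin N → ℝ)
    (hs2 : ∀ i j k l, Γ i j k l = Γ k l i j) (i j k l : Fin N) :
    hfun Γ a g (k, l, i, j) = - hfun Γ a g (i, j, k, l) := by
  simp only [hfun]
  rw [← hs2 i j k l]
  ring

lemma Tzero {N : ℕ} (Γ : Fin N → Fin N → Fin N → Fin N → ℝ) (a g L : Fin N → ℝ)
    (hs1 : ∀ i j k l, Γ i j k l = Γ j i k l)
    (hs2 : ∀ i j k l, Γ i j k l = Γ k l i j)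
    (h1 : (∑ x : Fin N × Fin N × Fin N × Fin N, hfun Γ a g x * L x.1) = 0) :
    (∑ x : Fin N × Fin N × Fin N × Fin N,
      hfun Γ a g x * (L x.1 + L x.2.1 - L x.2.2.1 - L x.2.2.2)) = 0 := by
  have e2 : (∑ x : Fin N × Fin N × Fin N × Fin N, hfun Γ a g x * L x.2.1)
      = ∑ x : Fin N × Fin N × Fin N × Fin N, hfun Γ a g x * L x.1 := by
    rw [sum_swap12 (fun x => hfun Γ a g x * L x.2.1)]
    exact Fintype.sum_congr _ _ fun ⟨i, j, k, l⟩ => by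
      simp only []
      rw [hfun_swap12 Γ a g hs1 i j k l]
  have e3 : (∑ x : Fin N × Fin N × Fin N × Fin N, hfun Γ a g x * L x.2.2.1)
      = -∑ x : Fin N × Fin N × Fin N × Fin N, hfun Γ a g x * L x.1 := by
    rw [sum_swappair (fun x => hfun Γ a g x * L x.2.2.1), ← Finset.sum_neg_distrib]
    exact Fintype.sum_congr _ _ fun ⟨i, j, k, l⟩ => by
      simp only []
      rw [hfun_swappair Γ a g hs2 i j k l]
      ring
  have e4 : (∑ x : Fin N × Fin N × Fin N × Fin N, hfun Γ a g x * L x.2.2.2)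
      = -∑ x : Fin N × Fin N × Fin N × Fin N, hfun Γ a g x * L x.2.1 := by
    rw [sum_swappair (fun x => hfun Γ a g x * L x.2.2.2), ← Finset.sum_neg_distrib]
    exact Fintype.sum_congr _ _ fun ⟨i, j, k, l⟩ => by
      simp only []
      rw [hfun_swappair Γ a g hs2 i j k l]
      ring
  have split : (∑ x : Fin N × Fin N × Fin N × Fin N,
      hfun Γ a g x * (L x.1 + L x.2.1 - L x.2.2.1 - L x.2.2.2))
      = (∑ x : Fin N × Fin N × Fin N × Fin N, hfun Γ a g x * L x.1)
        + (∑ x : Fin N × Fin N × Fin N × Fin N, hfun Γ a g x * L x.2.1)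
        - (∑ x : Fin N × Fin N × Fin N × Fin N, hfun Γ a g x * L x.2.2.1)
        - (∑ x : Fin N × Fin N × Fin N × Fin N, hfun Γ a g x * L x.2.2.2) := by
    rw [← Finset.sum_add_distrib, ← Finset.sum_sub_distrib, ← Finset.sum_sub_distrib]
    exact Fintype.sum_congr _ _ fun x => by ring
  rw [split, e2, e3, e4, e2, h1]
  ring

/-- for normal models, `Q^α(F) = 0` iff `F` is an equilibrium distribution. -/
theorem stmt3 {N d : ℕ} (hN : 0 < N) (hd : 0 < d)
    (α : ℝ) (hα0 : 0 < α) (hα1 : α < 1)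
    (p : Fin N → Fin d → ℝ) (Γ : Fin N → Fin N → Fin N → Fin N → ℝ)
    (hΓ : GammaOK p Γ) (hnorm : IsNormal p Γ)
    (F : Fin N → ℝ) (hF : ∀ i, 0 < F i ∧ F i < 1 / α) :
    Qop α Γ F = 0 ↔
      ∃ (K : ℝ) (b : Fin d → ℝ) (c : ℝ), 0 < K ∧
        ∀ i, F i / Psi α (F i)
          = K * Real.exp (-(∑ m, b m * p i m) - c * ∑ m, (p i m) ^ 2) := by
  obtain ⟨hΓ0, hs1, hs2, hcons⟩ := hΓ
  have hΨ : ∀ i, 0 < Psi α (F i) := fun i => Psi_pos' α (F i) hα0 (hF i).1 (hF i).2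
  have hg : ∀ i, 0 < F i / Psi α (F i) := fun i => div_pos (hF i).1 (hΨ i)
  have hterm : ∀ i j k l,
      Γ i j k l * (F k * F l * Psi α (F i) * Psi α (F j)
        - F i * F j * Psi α (F k) * Psi α (F l))
      = hfun Γ (fun i => Psi α (F i)) (fun i => F i / Psi α (F i)) (i, j, k, l) := by
    intro i j k l
    simp only [hfun]
    rw [keyA (F i) (F j) (F k) (F l) _ _ _ _ (hΨ i).ne' (hΨ j).ne' (hΨ k).ne' (hΨ l).ne']
  constructor
  · -- forward direction
    intro hQ
    set a : Fin N → ℝ := fun i => Psi α (F i) with ha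
    set g : Fin N → ℝ := fun i => F i / Psi α (F i) with hgdef
    set L : Fin N → ℝ := fun i => Real.log (g i) with hL
    have hq0 : ∀ i, (∑ j, ∑ k, ∑ l, hfun Γ a g (i, j, k, l)) = 0 := by
      intro i
      have h0 := congrFun hQ i
      simp only [Qop, Pi.zero_apply] at h0
      rw [← h0]
      exact Finset.sum_congr rfl fun j _ => Finset.sum_congr rfl fun k _ =>
        Finset.sum_congr rfl fun l _ => (hterm i j k l).symm
    have hS1 : (∑ x : Fin N × Fin N × Fin N × Fin N, hfun Γ a g x * L x.1) = 0 := by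
      calc (∑ x : Fin N × Fin N × Fin N × Fin N, hfun Γ a g x * L x.1)
          = ∑ i, ∑ j, ∑ k, ∑ l, hfun Γ a g (i, j, k, l) * L i := by
            rw [sum4_eq (fun i j k l => hfun Γ a g (i, j, k, l) * L i)]
        _ = ∑ i, (∑ j, ∑ k, ∑ l, hfun Γ a g (i, j, k, l)) * L i := by
            refine Finset.sum_congr rfl fun i _ => ?_
            rw [Finset.sum_mul]
            refine Finset.sum_congr rfl fun j _ => ?_
            rw [Finset.sum_mul]
            refine Finset.sum_congr rfl fun k _ => ?_
            rw [Finset.sum_mul]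
        _ = 0 := by
            simp only [hq0, zero_mul, Finset.sum_const_zero]
    have hT := Tzero Γ a g L hs1 hs2 hS1
    have hnp : ∀ x : Fin N × Fin N × Fin N × Fin N,
        hfun Γ a g x * (L x.1 + L x.2.1 - L x.2.2.1 - L x.2.2.2) ≤ 0 := by
      rintro ⟨i, j, k, l⟩
      have hlog : L i + L j - L k - L l
          = Real.log (g i * g j) - Real.log (g k * g l) := by
        rw [Real.log_mul (hg i).ne' (hg j).ne', Real.log_mul (hg k).ne' (hg l).ne']
        simp only [hL]
        ring
      have hmain := log_diff_nonpos (g k * g l) (g i * g j)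
        (mul_pos (hg k) (hg l)) (mul_pos (hg i) (hg j))
      have hcoef : 0 ≤ Γ i j k l * (a i * a j * a k * a l) :=
        mul_nonneg (hΓ0 i j k l)
          (mul_nonneg (mul_nonneg (mul_nonneg (hΨ i).le (hΨ j).le) (hΨ k).le) (hΨ l).le)
      have hprod := mul_nonpos_of_nonneg_of_nonpos hcoef hmain
      calc hfun Γ a g (i, j, k, l) * (L i + L j - L k - L l)
          = Γ i j k l * (a i * a j * a k * a l)
            * ((g k * g l - g i * g j) * (Real.log (g i * g j) - Real.log (g k * g l))) := by
            rw [hlog]; simp only [hfun]; ring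
        _ ≤ 0 := hprod
    have hzero : ∀ x : Fin N × Fin N × Fin N × Fin N,
        hfun Γ a g x * (L x.1 + L x.2.1 - L x.2.2.1 - L x.2.2.2) = 0 := by
      have hsum' : (∑ x : Fin N × Fin N × Fin N × Fin N,
          -(hfun Γ a g x * (L x.1 + L x.2.1 - L x.2.2.1 - L x.2.2.2))) = 0 := by
        rw [Finset.sum_neg_distrib, hT, neg_zero]
      have := (Finset.sum_eq_zero_iff_of_nonneg
        (fun x _ => neg_nonneg.mpr (hnp x))).mp hsum'
      intro x
      have := this x (Finset.mem_univ x)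
      linarith
    have hinv : IsCollInv Γ L := by
      intro i j k l hγ
      have h0 := hzero (i, j, k, l)
      simp only [hfun] at h0
      have hlog : L i + L j - L k - L l
          = Real.log (g i * g j) - Real.log (g k * g l) := by
        rw [Real.log_mul (hg i).ne' (hg j).ne', Real.log_mul (hg k).ne' (hg l).ne']
        simp only [hL]
        ring
      have h0' : (Γ i j k l * (a i * a j * a k * a l))
          * ((g k * g l - g i * g j) * (Real.log (g i * g j) - Real.log (g k * g l))) = 0 := by
        have hll : L i + L j - L k - L l
            = Real.log (g i * g j) - Real.log (g k * g l) := hlog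
        linear_combination h0 - Γ i j k l * (a i * a j * a k * a l) * (g k * g l - g i * g j) * hll
      have hane : (Γ i j k l * (a i * a j * a k * a l)) ≠ 0 :=
        mul_ne_zero hγ (mul_ne_zero (mul_ne_zero (mul_ne_zero (hΨ i).ne' (hΨ j).ne') (hΨ k).ne') (hΨ l).ne')
      have h1 := (mul_eq_zero.mp h0').resolve_left hane
      have heq := log_diff_eq_zero (g k * g l) (g i * g j)
        (mul_pos (hg k) (hg l)) (mul_pos (hg i) (hg j)) h1
      have : Real.log (g i * g j) = Real.log (g k * g l) := by rw [heq]
      rw [Real.log_mul (hg i).ne' (hg j).ne', Real.log_mul (hg k).ne' (hg l).ne'] at this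
      simpa only [hL] using this
    obtain ⟨A, c, b, hφ⟩ := hnorm L hinv
    refine ⟨Real.exp A, fun m => -(b m), -c, Real.exp_pos A, fun i => ?_⟩
    have hexp : (-(∑ m, -(b m) * p i m) - (-c) * ∑ m, (p i m) ^ 2)
        = (∑ m, b m * p i m) + c * ∑ m, (p i m) ^ 2 := by
      simp only [neg_mul, Finset.sum_neg_distrib]
      ring
    calc F i / Psi α (F i) = Real.exp (Real.log (g i)) := (Real.exp_log (hg i)).symm
      _ = Real.exp (A + ((∑ m, b m * p i m) + c * ∑ m, (p i m) ^ 2)) := by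
          have := hφ i
          simp only [hL] at this
          rw [this, add_assoc]
      _ = Real.exp A * Real.exp ((∑ m, b m * p i m) + c * ∑ m, (p i m) ^ 2) := Real.exp_add _ _
      _ = Real.exp A * Real.exp (-(∑ m, -(b m) * p i m) - (-c) * ∑ m, (p i m) ^ 2) := by
          rw [hexp]
  · -- backward direction
    rintro ⟨K, b, c, hK, hKeq⟩
    funext i
    simp only [Qop, Pi.zero_apply]
    refine Finset.sum_eq_zero fun j _ => Finset.sum_eq_zero fun k _ =>
      Finset.sum_eq_zero fun l _ => ?_
    by_cases hγ : Γ i j k l = 0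
    · rw [hγ, zero_mul]
    · obtain ⟨hm, he⟩ := hcons i j k l hγ
      have hB : (∑ m, b m * p i m) + ∑ m, b m * p j m
          = (∑ m, b m * p k m) + ∑ m, b m * p l m := by
        rw [← Finset.sum_add_distrib, ← Finset.sum_add_distrib]
        exact Finset.sum_congr rfl fun m _ => by rw [← mul_add, ← mul_add, hm m]
      have hGG : (F i / Psi α (F i)) * (F j / Psi α (F j))
          = (F k / Psi α (F k)) * (F l / Psi α (F l)) := by
        have hE : (-∑ m, b m * p i m - c * ∑ m, (p i m) ^ 2)
            + (-∑ m, b m * p j m - c * ∑ m, (p j m) ^ 2)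
            = (-∑ m, b m * p k m - c * ∑ m, (p k m) ^ 2)
              + (-∑ m, b m * p l m - c * ∑ m, (p l m) ^ 2) := by
          linear_combination -hB - c * he
        have hEE := congrArg Real.exp hE
        rw [Real.exp_add, Real.exp_add] at hEE
        rw [hKeq i, hKeq j, hKeq k, hKeq l, mul_mul_mul_comm, hEE, ← mul_mul_mul_comm]
      rw [hterm i j k l]
      simp only [hfun]
      rw [hGG]
      ring
end

section
/- Fix α ∈ (0,1) and let μ(y) = y log y + (1−αy) log(1−αy) − (1+(1−α)y) log(1+(1−α)y) for 0 < y < 1/α. Then μ(y) ≤ 0 for all y ∈ (0, 1/α), μ is bounded below on (0, 1/α), and μ(y) → 0 as y → 0⁺ and as y → (1/α)⁻. -/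
open Real Finset Filter Set

lemma mul_log_lb {x : ℝ} (hx : 0 < x) : x - 1 ≤ x * Real.log x := by
  have h := Real.add_one_le_exp (-Real.log x)
  rw [Real.exp_neg, Real.exp_log hx] at h
  have h2 := mul_le_mul_of_nonneg_left h hx.le
  rw [mul_inv_cancel₀ hx.ne'] at h2
  nlinarith

/-- `μ` is nonpositive and bounded below on `(0, 1/α)`, with limit `0`
at both endpoints. -/
theorem stmt7 (α : ℝ) (hα0 : 0 < α) (hα1 : α < 1) :
    (∀ y ∈ Set.Ioo (0 : ℝ) (1 / α), muF α y ≤ 0) ∧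
    (∃ C : ℝ, ∀ y ∈ Set.Ioo (0 : ℝ) (1 / α), C ≤ muF α y) ∧
    Filter.Tendsto (muF α) (nhdsWithin 0 (Set.Ioi 0)) (nhds 0) ∧
    Filter.Tendsto (muF α) (nhdsWithin (1 / α) (Set.Iio (1 / α))) (nhds 0) := by
  have hcont : Continuous (muF α) := by
    unfold muF
    exact ((Real.continuous_mul_log.comp continuous_id).add
      (Real.continuous_mul_log.comp
        (continuous_const.sub (continuous_const.mul continuous_id)))).sub
      (Real.continuous_mul_log.comp
        (continuous_const.add (continuous_const.mul continuous_id)))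
  have hbounds : ∀ y ∈ Set.Ioo (0 : ℝ) (1 / α), 0 < y ∧ 0 < 1 - α * y ∧
      y + (1 - α * y) = 1 + (1 - α) * y := by
    rintro y ⟨hy0, hy1⟩
    have hαy : α * y < 1 := by
      have := (lt_div_iff₀ hα0).mp hy1
      linarith [mul_comm y α]
    exact ⟨hy0, by linarith, by ring⟩
  refine ⟨?_, ?_, ?_, ?_⟩
  · rintro y hy
    obtain ⟨hy0, ha, hab⟩ := hbounds y hy
    set a := 1 - α * y with ha_def
    have hlog1 : Real.log y ≤ Real.log (y + a) := by
      apply Real.log_le_log hy0; linarith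
    have hlog2 : Real.log a ≤ Real.log (y + a) := by
      apply Real.log_le_log ha; linarith
    have h1 : y * Real.log y ≤ y * Real.log (y + a) :=
      mul_le_mul_of_nonneg_left hlog1 hy0.le
    have h2 : a * Real.log a ≤ a * Real.log (y + a) :=
      mul_le_mul_of_nonneg_left hlog2 ha.le
    have : muF α y = y * Real.log y + a * Real.log a - (y + a) * Real.log (y + a) := by
      rw [muF, hab]
    rw [this]; nlinarith
  · refine ⟨-2 - (1 / α) * Real.log (1 / α), ?_⟩
    rintro y hy
    obtain ⟨hy0, ha, hab⟩ := hbounds y hy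
    set a := 1 - α * y with ha_def
    set b := 1 + (1 - α) * y with hb_def
    clear_value a b
    have hb1 : 1 ≤ b := by
      have : 0 ≤ (1 - α) * y := mul_nonneg (by linarith) hy0.le
      simp only [hb_def]; linarith
    have hbα : b ≤ 1 / α := by
      have h1 : (1 - α) * y ≤ (1 - α) * (1 / α) :=
        mul_le_mul_of_nonneg_left hy.2.le (by linarith)
      have h2 : (1 - α) * (1 / α) = 1 / α - 1 := by field_simp
      simp only [hb_def]; linarith
    have h1 : y - 1 ≤ y * Real.log y := mul_log_lb hy0
    have h2 : a - 1 ≤ a * Real.log a := mul_log_lb ha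
    have h3 : b * Real.log b ≤ (1 / α) * Real.log (1 / α) := by
      have hlb : 0 ≤ Real.log b := Real.log_nonneg hb1
      have hlb2 : Real.log b ≤ Real.log (1 / α) :=
        Real.log_le_log (by linarith) hbα
      nlinarith
    have : muF α y = y * Real.log y + a * Real.log a - b * Real.log b := by
      rw [ha_def, hb_def]; rfl
    rw [this]
    have hy' : -1 ≤ y * Real.log y := by linarith
    have ha' : -1 ≤ a * Real.log a := by linarith
    linarith
  · have h0 : muF α 0 = 0 := by simp [muF]
    have := (hcont.tendsto 0).mono_left (nhdsWithin_le_nhds (s := Set.Ioi (0:ℝ)))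
    rwa [h0] at this
  · have hne : α ≠ 0 := ne_of_gt hα0
    have h0 : muF α (1 / α) = 0 := by
      have e1 : 1 - α * (1 / α) = 0 := by field_simp; ring
      have e2 : 1 + (1 - α) * (1 / α) = 1 / α := by field_simp; ring
      unfold muF; rw [e1, e2]; simp
    have := (hcont.tendsto (1 / α)).mono_left
      (nhdsWithin_le_nhds (s := Set.Iio (1 / α)))
    rwa [h0] at this
end

section
/- Let F : (0,∞) → ℝ^N be differentiable with 0 < F_i(x) < 1/α for all i and x, and suppose F solves the planar stationary system B F′(x) = Q^α(F(x)), where B = diag(p_1^1,…,p_N^1). Define the modified H-functional H̃[F](x) = Σ_{i=1}^N p_i^1 μ(F_i(x)). Then H̃[F] is differentiable with d/dx H̃[F](x) = ⟨log(F(x)/Ψ_α(F(x))), Q^α(F(x))⟩ ≤ 0 for all x > 0; in particular H̃[F] is non-increasing. -/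
open Real Finset Filter Set

lemma one_sub_pos' {α y : ℝ} (hα0 : 0 < α) (hy' : y < 1 / α) : 0 < 1 - α * y := by
  have h := mul_lt_mul_of_pos_left hy' hα0
  rw [mul_one_div, div_self hα0.ne'] at h
  linarith

lemma psi_pos {α y : ℝ} (hα0 : 0 < α) (hα1 : α < 1) (hy : 0 < y) (hy' : y < 1 / α) :
    0 < Psi α y := by
  have h1 : 0 < 1 - α * y := one_sub_pos' hα0 hy'
  have h2 : 0 < 1 + (1 - α) * y := by nlinarith
  exact mul_pos (rpow_pos_of_pos h1 _) (rpow_pos_of_pos h2 _)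

lemma log_div_psi {α y : ℝ} (hα0 : 0 < α) (hα1 : α < 1) (hy : 0 < y) (hy' : y < 1 / α) :
    Real.log (y / Psi α y)
      = Real.log y - α * Real.log (1 - α * y) - (1 - α) * Real.log (1 + (1 - α) * y) := by
  have h1 : 0 < 1 - α * y := one_sub_pos' hα0 hy'
  have h2 : 0 < 1 + (1 - α) * y := by nlinarith
  rw [Real.log_div hy.ne' (psi_pos hα0 hα1 hy hy').ne', Psi,
    Real.log_mul (rpow_pos_of_pos h1 _).ne' (rpow_pos_of_pos h2 _).ne',
    Real.log_rpow h1, Real.log_rpow h2]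
  ring

lemma sum_swap12_s10 {N : ℕ} (g : Fin N → Fin N → Fin N → Fin N → ℝ) :
    ∑ i, ∑ j, ∑ k, ∑ l, g i j k l = ∑ i, ∑ j, ∑ k, ∑ l, g j i k l :=
  Finset.sum_comm

lemma sum_swap34 {N : ℕ} (g : Fin N → Fin N → Fin N → Fin N → ℝ) :
    ∑ i, ∑ j, ∑ k, ∑ l, g i j k l = ∑ i, ∑ j, ∑ k, ∑ l, g i j l k :=
  Finset.sum_congr rfl fun i _ => Finset.sum_congr rfl fun j _ => Finset.sum_comm

lemma sum_swap_pairs {N : ℕ} (g : Fin N → Fin N → Fin N → Fin N → ℝ) :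
    ∑ i, ∑ j, ∑ k, ∑ l, g i j k l = ∑ i, ∑ j, ∑ k, ∑ l, g k l i j := by
  calc ∑ i, ∑ j, ∑ k, ∑ l, g i j k l
      = ∑ i, ∑ k, ∑ j, ∑ l, g i j k l :=
        Finset.sum_congr rfl fun i _ => Finset.sum_comm
    _ = ∑ i, ∑ k, ∑ l, ∑ j, g i j k l :=
        Finset.sum_congr rfl fun i _ => Finset.sum_congr rfl fun k _ => Finset.sum_comm
    _ = ∑ k, ∑ i, ∑ l, ∑ j, g i j k l := Finset.sum_comm
    _ = ∑ k, ∑ l, ∑ i, ∑ j, g i j k l :=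
        Finset.sum_congr rfl fun k _ => Finset.sum_comm

lemma entropy_sign {N : ℕ} {α : ℝ} (hα0 : 0 < α) (hα1 : α < 1)
    (Γ : Fin N → Fin N → Fin N → Fin N → ℝ)
    (hnn : ∀ i j k l, 0 ≤ Γ i j k l)
    (hs1 : ∀ i j k l, Γ i j k l = Γ j i k l)
    (hs2 : ∀ i j k l, Γ i j k l = Γ k l i j)
    (P : Fin N → ℝ) (hP : ∀ i, 0 < P i ∧ P i < 1 / α) :
    dotN (fun i => Real.log (P i / Psi α (P i))) (Qop α Γ P) ≤ 0 := by
  have hΨ : ∀ i, 0 < Psi α (P i) := fun i => psi_pos hα0 hα1 (hP i).1 (hP i).2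
  set G : Fin N → ℝ := fun i => P i / Psi α (P i) with hGdef
  have hG : ∀ i, 0 < G i := fun i => div_pos (hP i).1 (hΨ i)
  -- coefficient
  set c : Fin N → Fin N → Fin N → Fin N → ℝ := fun i j k l =>
    Γ i j k l * ((Psi α (P i) * Psi α (P j) * Psi α (P k) * Psi α (P l)) *
      (G k * G l - G i * G j)) with hcdef
  have hDrw : ∀ i j k l,
      Γ i j k l * (P k * P l * Psi α (P i) * Psi α (P j)
        - P i * P j * Psi α (P k) * Psi α (P l)) = c i j k l := by
    intro i j k l
    rw [hcdef]
    simp only [hGdef]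
    field_simp [(hΨ i).ne', (hΨ j).ne', (hΨ k).ne', (hΨ l).ne']
  set S : ℝ := dotN (fun i => Real.log (G i)) (Qop α Γ P) with hSdef
  have h1 : S = ∑ i, ∑ j, ∑ k, ∑ l, c i j k l * Real.log (G i) := by
    rw [hSdef]
    unfold dotN Qop
    refine Finset.sum_congr rfl fun i _ => ?_
    rw [Finset.mul_sum]
    refine Finset.sum_congr rfl fun j _ => ?_
    rw [Finset.mul_sum]
    refine Finset.sum_congr rfl fun k _ => ?_
    rw [Finset.mul_sum]
    refine Finset.sum_congr rfl fun l _ => ?_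
    rw [← hDrw i j k l]
    ring
  have hcsym12 : ∀ i j k l, c j i k l = c i j k l := by
    intro i j k l
    simp only [hcdef]
    rw [← hs1 i j k l]
    ring
  have hcsym34 : ∀ i j k l, c i j l k = c i j k l := by
    intro i j k l
    have : Γ i j l k = Γ i j k l := by rw [hs2 i j l k, hs1 l k i j, ← hs2 i j k l]
    simp only [hcdef, this]
    ring
  have hcanti : ∀ i j k l, c k l i j = - c i j k l := by
    intro i j k l
    simp only [hcdef]
    rw [← hs2 i j k l]
    ring
  have h2 : S = ∑ i, ∑ j, ∑ k, ∑ l, c i j k l * Real.log (G j) := by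
    rw [h1, sum_swap12_s10 (fun i j k l => c i j k l * Real.log (G i))]
    exact Finset.sum_congr rfl fun i _ => Finset.sum_congr rfl fun j _ =>
      Finset.sum_congr rfl fun k _ => Finset.sum_congr rfl fun l _ => by
        rw [hcsym12]
  have h3 : S = -∑ i, ∑ j, ∑ k, ∑ l, c i j k l * Real.log (G k) := by
    rw [h1, sum_swap_pairs (fun i j k l => c i j k l * Real.log (G i))]
    rw [← Finset.sum_neg_distrib]
    refine Finset.sum_congr rfl fun i _ => ?_
    rw [← Finset.sum_neg_distrib]
    refine Finset.sum_congr rfl fun j _ => ?_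
    rw [← Finset.sum_neg_distrib]
    refine Finset.sum_congr rfl fun k _ => ?_
    rw [← Finset.sum_neg_distrib]
    refine Finset.sum_congr rfl fun l _ => ?_
    rw [hcanti]
    ring
  have h4 : S = -∑ i, ∑ j, ∑ k, ∑ l, c i j k l * Real.log (G l) := by
    rw [h3, sum_swap34 (fun i j k l => c i j k l * Real.log (G k))]
    congr 1
    exact Finset.sum_congr rfl fun i _ => Finset.sum_congr rfl fun j _ =>
      Finset.sum_congr rfl fun k _ => Finset.sum_congr rfl fun l _ => by
        rw [hcsym34]
  have hT : ∑ i, ∑ j, ∑ k, ∑ l, c i j k l *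
      (Real.log (G i) + Real.log (G j) - Real.log (G k) - Real.log (G l)) = 4 * S := by
    have expand : ∀ i j k l, c i j k l *
        (Real.log (G i) + Real.log (G j) - Real.log (G k) - Real.log (G l))
        = c i j k l * Real.log (G i) + c i j k l * Real.log (G j)
          - c i j k l * Real.log (G k) - c i j k l * Real.log (G l) := by
      intros; ring
    simp only [expand, Finset.sum_add_distrib, Finset.sum_sub_distrib]
    rw [← h1, ← h2]
    have e3 : ∑ i, ∑ j, ∑ k, ∑ l, c i j k l * Real.log (G k) = -S := by
      rw [h3]; ring
    have e4 : ∑ i, ∑ j, ∑ k, ∑ l, c i j k l * Real.log (G l) = -S := by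
      rw [h4]; ring
    rw [e3, e4]; ring
  have hTnp : ∑ i, ∑ j, ∑ k, ∑ l, c i j k l *
      (Real.log (G i) + Real.log (G j) - Real.log (G k) - Real.log (G l)) ≤ 0 := by
    refine Finset.sum_nonpos fun i _ => Finset.sum_nonpos fun j _ =>
      Finset.sum_nonpos fun k _ => Finset.sum_nonpos fun l _ => ?_
    have ha : (0:ℝ) < G i * G j := mul_pos (hG i) (hG j)
    have hb : (0:ℝ) < G k * G l := mul_pos (hG k) (hG l)
    have hlog : Real.log (G i) + Real.log (G j) - Real.log (G k) - Real.log (G l)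
        = Real.log (G i * G j) - Real.log (G k * G l) := by
      rw [Real.log_mul (hG i).ne' (hG j).ne', Real.log_mul (hG k).ne' (hG l).ne']
      ring
    rw [hlog, hcdef]
    have hW : 0 ≤ Psi α (P i) * Psi α (P j) * Psi α (P k) * Psi α (P l) :=
      le_of_lt (mul_pos (mul_pos (mul_pos (hΨ i) (hΨ j)) (hΨ k)) (hΨ l))
    rcases le_total (G i * G j) (G k * G l) with hle | hle
    · apply mul_nonpos_of_nonneg_of_nonpos
      · exact mul_nonneg (hnn i j k l) (mul_nonneg hW (by linarith))
      · have := Real.log_le_log ha hle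
        linarith
    · apply mul_nonpos_of_nonpos_of_nonneg
      · apply mul_nonpos_of_nonneg_of_nonpos (hnn i j k l)
        exact mul_nonpos_of_nonneg_of_nonpos hW (by linarith)
      · have := Real.log_le_log hb hle
        linarith
  have : 4 * S ≤ 0 := hT ▸ hTnp
  linarith [this]

lemma hasDerivAt_muF {α : ℝ} (hα0 : 0 < α) (hα1 : α < 1) {f : ℝ → ℝ} {v x : ℝ}
    (hf : HasDerivAt f v x) (h0 : 0 < f x) (hx' : f x < 1 / α) :
    HasDerivAt (fun t => muF α (f t)) (Real.log (f x / Psi α (f x)) * v) x := by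
  have h1 : 0 < 1 - α * f x := one_sub_pos' hα0 hx'
  have h2 : 0 < 1 + (1 - α) * f x := by nlinarith
  have d1 : HasDerivAt (fun t => f t * Real.log (f t)) ((Real.log (f x) + 1) * v) x := by
    simpa [Function.comp_def] using (Real.hasDerivAt_mul_log h0.ne').comp x hf
  have du : HasDerivAt (fun t => 1 - α * f t) (-(α * v)) x := (hf.const_mul α).const_sub 1
  have d2 : HasDerivAt (fun t => (1 - α * f t) * Real.log (1 - α * f t))
      ((Real.log (1 - α * f x) + 1) * -(α * v)) x := by
    simpa [Function.comp_def] using (Real.hasDerivAt_mul_log h1.ne').comp x du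
  have dw : HasDerivAt (fun t => 1 + (1 - α) * f t) ((1 - α) * v) x :=
    (hf.const_mul (1 - α)).const_add 1
  have d3 : HasDerivAt (fun t => (1 + (1 - α) * f t) * Real.log (1 + (1 - α) * f t))
      ((Real.log (1 + (1 - α) * f x) + 1) * ((1 - α) * v)) x := by
    simpa [Function.comp_def] using (Real.hasDerivAt_mul_log h2.ne').comp x dw
  have D := (d1.fun_add d2).fun_sub d3
  have : HasDerivAt (fun t => muF α (f t))
      ((Real.log (f x) + 1) * v + (Real.log (1 - α * f x) + 1) * -(α * v)
        - (Real.log (1 + (1 - α) * f x) + 1) * ((1 - α) * v)) x := by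
    simpa only [muF] using D
  convert this using 1
  rw [log_div_psi hα0 hα1 h0 hx']
  ring

/-- the modified H-functional is non-increasing along planar stationary
solutions. -/
theorem stmt10 {N d : ℕ} (hN : 0 < N) (hd : 0 < d)
    (α : ℝ) (hα0 : 0 < α) (hα1 : α < 1)
    (p : Fin N → Fin d → ℝ) (Γ : Fin N → Fin N → Fin N → Fin N → ℝ)
    (hΓ : GammaOK p Γ)
    (F F' : ℝ → Fin N → ℝ)
    (hpos : ∀ x ∈ Set.Ioi (0 : ℝ), ∀ i, 0 < F x i ∧ F x i < 1 / α)
    (hdiff : ∀ x ∈ Set.Ioi (0 : ℝ), ∀ i, HasDerivAt (fun t => F t i) (F' x i) x)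
    (heq : ∀ x ∈ Set.Ioi (0 : ℝ), ∀ i, p i ⟨0, hd⟩ * F' x i = Qop α Γ (F x) i) :
    (∀ x ∈ Set.Ioi (0 : ℝ),
      HasDerivAt (fun t => ∑ i, p i ⟨0, hd⟩ * muF α (F t i))
        (dotN (fun i => Real.log (F x i / Psi α (F x i))) (Qop α Γ (F x))) x ∧
      dotN (fun i => Real.log (F x i / Psi α (F x i))) (Qop α Γ (F x)) ≤ 0) ∧
    AntitoneOn (fun x => ∑ i, p i ⟨0, hd⟩ * muF α (F x i)) (Set.Ioi 0) := by
  have key : ∀ x ∈ Set.Ioi (0 : ℝ),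
      HasDerivAt (fun t => ∑ i, p i ⟨0, hd⟩ * muF α (F t i))
        (dotN (fun i => Real.log (F x i / Psi α (F x i))) (Qop α Γ (F x))) x ∧
      dotN (fun i => Real.log (F x i / Psi α (F x i))) (Qop α Γ (F x)) ≤ 0 := by
    intro x hx
    constructor
    · have hder : ∀ i ∈ Finset.univ, HasDerivAt (fun t => p i ⟨0, hd⟩ * muF α (F t i))
          (p i ⟨0, hd⟩ * (Real.log (F x i / Psi α (F x i)) * F' x i)) x := fun i _ =>
        (hasDerivAt_muF hα0 hα1 (hdiff x hx i) (hpos x hx i).1 (hpos x hx i).2).const_mul _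
      have hsum := HasDerivAt.fun_sum hder
      have hval : ∑ i, p i ⟨0, hd⟩ * (Real.log (F x i / Psi α (F x i)) * F' x i)
          = dotN (fun i => Real.log (F x i / Psi α (F x i))) (Qop α Γ (F x)) := by
        unfold dotN
        refine Finset.sum_congr rfl fun i _ => ?_
        rw [← heq x hx i]
        ring
      exact hval ▸ hsum
    · exact entropy_sign hα0 hα1 Γ hΓ.1 hΓ.2.1 hΓ.2.2.1 (F x) (hpos x hx)
  refine ⟨key, ?_⟩
  apply antitoneOn_of_deriv_nonpos (convex_Ioi (0:ℝ))
  · exact fun x hx => ((key x hx).1).continuousAt.continuousWithinAt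
  · intro x hx
    rw [interior_Ioi] at hx
    exact ((key x hx).1).differentiableAt.differentiableWithinAt
  · intro x hx
    rw [interior_Ioi] at hx
    rw [((key x hx).1).deriv]
    exact (key x hx).2
end

section
/- (Trend to equilibrium, planar stationary case.) Let F : [0,∞) → ℝ^N be differentiable and bounded, solving B F′(x) = Q^α(F(x)) for all x > 0 with B = diag(p_1^1,…,p_N^1), and assume there exists η > 0 such that η ≤ F_i(x) ≤ 1/α − η for all i ∈ {1,…,N} and all x ≥ 0. Let ℙ be the set of equilibrium distributions P having the same fluxes as F, i.e., ⟨B1,P⟩ = ⟨B1,F(x)⟩, ⟨Bp^i,P⟩ = ⟨Bp^i,F(x)⟩ for i = 1,…,d, and ⟨B|p|²,P⟩ = ⟨B|p|²,F(x)⟩ (these fluxes of F are independent of x). Then dist(F(x), ℙ) → 0 as x → ∞. If moreover ℙ is finite, then there exists P ∈ ℙ with lim_{x→∞} F(x) = P. -/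
open Real Finset Filter Set
noncomputable def gq {N : ℕ} (α : ℝ) (G : Fin N → ℝ) (i j k l : Fin N) : ℝ :=
  G k * G l * Psi α (G i) * Psi α (G j) - G i * G j * Psi α (G k) * Psi α (G l)
lemma Qop_eq {N : ℕ} (α : ℝ) (Γ : Fin N → Fin N → Fin N → Fin N → ℝ) (G : Fin N → ℝ)
    (i : Fin N) : Qop α Γ G i = ∑ j, ∑ k, ∑ l, Γ i j k l * gq α G i j k l := rfl
lemma sum4_swap12 {M : Type*} [AddCommMonoid M] {n : ℕ}
    (f : Fin n → Fin n → Fin n → Fin n → M) :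
    ∑ i, ∑ j, ∑ k, ∑ l, f i j k l = ∑ i, ∑ j, ∑ k, ∑ l, f j i k l :=
  Finset.sum_comm
lemma sum4_swap34 {M : Type*} [AddCommMonoid M] {n : ℕ}
    (f : Fin n → Fin n → Fin n → Fin n → M) :
    ∑ i, ∑ j, ∑ k, ∑ l, f i j k l = ∑ i, ∑ j, ∑ k, ∑ l, f i j l k :=
  Finset.sum_congr rfl fun _ _ => Finset.sum_congr rfl fun _ _ => Finset.sum_comm
lemma sum4_swap_pairs {M : Type*} [AddCommMonoid M] {n : ℕ}
    (f : Fin n → Fin n → Fin n → Fin n → M) :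
    ∑ i, ∑ j, ∑ k, ∑ l, f i j k l = ∑ i, ∑ j, ∑ k, ∑ l, f k l i j := by
  have h : ∑ a : Fin n × Fin n, ∑ b : Fin n × Fin n, f a.1 a.2 b.1 b.2
      = ∑ a : Fin n × Fin n, ∑ b : Fin n × Fin n, f b.1 b.2 a.1 a.2 := Finset.sum_comm
  simpa [Fintype.sum_prod_type] using h

section Sym
variable {N : ℕ} (α : ℝ) (Γ : Fin N → Fin N → Fin N → Fin N → ℝ)

lemma gq_swap12 (G : Fin N → ℝ) (i j k l : Fin N) : gq α G j i k l = gq α G i j k l := by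
  unfold gq; ring

lemma gq_swap_pairs (G : Fin N → ℝ) (i j k l : Fin N) : gq α G k l i j = - gq α G i j k l := by
  unfold gq; ring

lemma sym_identity
    (hs1 : ∀ i j k l, Γ i j k l = Γ j i k l)
    (hs2 : ∀ i j k l, Γ i j k l = Γ k l i j)
    (θ G : Fin N → ℝ) :
    4 * (∑ i, θ i * Qop α Γ G i)
      = ∑ i, ∑ j, ∑ k, ∑ l, Γ i j k l * ((θ i + θ j) - (θ k + θ l)) * gq α G i j k l := by
  set X : Fin N → Fin N → Fin N → Fin N → ℝ := fun i j k l => Γ i j k l * gq α G i j k l with hX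
  have e1 : (∑ i, θ i * Qop α Γ G i) = ∑ i, ∑ j, ∑ k, ∑ l, θ i * X i j k l := by
    refine Finset.sum_congr rfl fun i _ => ?_
    rw [Qop_eq]
    simp [Finset.mul_sum, hX]
  have e2 : (∑ i, θ i * Qop α Γ G i) = ∑ i, ∑ j, ∑ k, ∑ l, θ j * X i j k l := by
    rw [e1, sum4_swap12 (fun i j k l => θ i * X i j k l)]
    refine Finset.sum_congr rfl fun i _ => Finset.sum_congr rfl fun j _ =>
      Finset.sum_congr rfl fun k _ => Finset.sum_congr rfl fun l _ => ?_
    rw [hX]; dsimp only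
    rw [hs1 j i k l, gq_swap12]
  have e3 : (∑ i, θ i * Qop α Γ G i) = ∑ i, ∑ j, ∑ k, ∑ l, -(θ k * X i j k l) := by
    rw [e1, sum4_swap_pairs (fun i j k l => θ i * X i j k l)]
    refine Finset.sum_congr rfl fun i _ => Finset.sum_congr rfl fun j _ =>
      Finset.sum_congr rfl fun k _ => Finset.sum_congr rfl fun l _ => ?_
    rw [hX]; dsimp only
    rw [hs2 k l i j, gq_swap_pairs]; ring
  have e4 : (∑ i, θ i * Qop α Γ G i) = ∑ i, ∑ j, ∑ k, ∑ l, -(θ l * X i j k l) := by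
    rw [e1, sum4_swap_pairs (fun i j k l => θ i * X i j k l),
      sum4_swap34 (fun i j k l => θ k * X k l i j)]
    refine Finset.sum_congr rfl fun i _ => Finset.sum_congr rfl fun j _ =>
      Finset.sum_congr rfl fun k _ => Finset.sum_congr rfl fun l _ => ?_
    rw [hX]; dsimp only
    have hg : Γ i j l k = Γ i j k l := by rw [hs2 i j l k, hs1 l k i j, ← hs2 i j k l]
    rw [hs2 l k i j, hg, gq_swap12 α G k l i j, gq_swap_pairs α G i j k l]; ring
  have comb : ∀ i j k l : Fin N,
      θ i * X i j k l + (θ j * X i j k l + (-(θ k * X i j k l) + -(θ l * X i j k l)))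
        = Γ i j k l * ((θ i + θ j) - (θ k + θ l)) * gq α G i j k l := by
    intro i j k l; rw [hX]; dsimp only; ring
  calc 4 * (∑ i, θ i * Qop α Γ G i)
      = (∑ i, θ i * Qop α Γ G i) + ((∑ i, θ i * Qop α Γ G i)
        + ((∑ i, θ i * Qop α Γ G i) + (∑ i, θ i * Qop α Γ G i))) := by ring
    _ = ∑ i, ∑ j, ∑ k, ∑ l, (θ i * X i j k l + (θ j * X i j k l
        + (-(θ k * X i j k l) + -(θ l * X i j k l)))) := by
        nth_rewrite 1 [e1]; nth_rewrite 1 [e2]; nth_rewrite 1 [e3]; nth_rewrite 1 [e4]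
        simp only [← Finset.sum_add_distrib]
    _ = ∑ i, ∑ j, ∑ k, ∑ l, Γ i j k l * ((θ i + θ j) - (θ k + θ l)) * gq α G i j k l := by
        refine Finset.sum_congr rfl fun i _ => Finset.sum_congr rfl fun j _ =>
          Finset.sum_congr rfl fun k _ => Finset.sum_congr rfl fun l _ => comb i j k l
end Sym

section Basic
variable {α η y : ℝ}

lemma openbox_pos (hα0 : 0 < α) (hα1 : α < 1) (h1 : 0 < y) (h2 : y < 1/α) :
    0 < 1 - α * y ∧ 0 < 1 + (1 - α) * y := by
  have h3 : α * y < 1 := by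
    have := (lt_div_iff₀ hα0).mp h2
    linarith
  constructor
  · linarith
  · nlinarith

lemma box_mem_open (hα0 : 0 < α) (hη : 0 < η) (h1 : η ≤ y) (h2 : y ≤ 1/α - η) :
    0 < y ∧ y < 1/α := ⟨lt_of_lt_of_le hη h1, lt_of_le_of_lt h2 (by linarith)⟩

lemma Psi_pos (h2 : 0 < 1 - α*y) (h3 : 0 < 1 + (1-α)*y) : 0 < Psi α y :=
  mul_pos (Real.rpow_pos_of_pos h2 _) (Real.rpow_pos_of_pos h3 _)

noncomputable def phiF (α y : ℝ) : ℝ := Real.log y - Real.log (Psi α y)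

lemma exp_phiF (h1 : 0 < y) (h2 : 0 < 1 - α*y) (h3 : 0 < 1 + (1-α)*y) :
    Real.exp (phiF α y) = y / Psi α y := by
  rw [phiF, Real.exp_sub, Real.exp_log h1, Real.exp_log (Psi_pos h2 h3)]

lemma log_term_nonpos {a b : ℝ} (ha : 0 < a) (hb : 0 < b) :
    (Real.log b - Real.log a) * (a - b) ≤ 0 := by
  rcases le_total a b with h | h
  · have h1 : Real.log a ≤ Real.log b := Real.log_le_log (by positivity) h  -- check name
    nlinarith
  · have h1 : Real.log b ≤ Real.log a := Real.log_le_log (by positivity) h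
    nlinarith

lemma log_term_zero {a b : ℝ} (ha : 0 < a) (hb : 0 < b)
    (h : (Real.log b - Real.log a) * (a - b) = 0) : a = b := by
  rcases lt_trichotomy a b with h' | h' | h'
  · have := Real.log_lt_log ha h'; nlinarith
  · exact h'
  · have := Real.log_lt_log hb h'; nlinarith
end Basic

noncomputable def Dfun {N : ℕ} (α : ℝ) (Γ : Fin N → Fin N → Fin N → Fin N → ℝ)
    (G : Fin N → ℝ) : ℝ := -∑ i, phiF α (G i) * Qop α Γ G i

section Sign
variable {N : ℕ} {α : ℝ} {Γ : Fin N → Fin N → Fin N → Fin N → ℝ}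

/-- pointwise data for a state in the open box -/
structure BoxPos (α : ℝ) {N : ℕ} (G : Fin N → ℝ) : Prop where
  pos : ∀ i, 0 < G i
  pos2 : ∀ i, 0 < 1 - α * G i
  pos3 : ∀ i, 0 < 1 + (1 - α) * G i

lemma BoxPos.psi (h : BoxPos α G) (i : Fin N) : 0 < Psi α (G i) :=
  Psi_pos (h.pos2 i) (h.pos3 i)

lemma boxPos_of_open {G : Fin N → ℝ} (hα0 : 0 < α) (hα1 : α < 1)
    (h : ∀ i, 0 < G i ∧ G i < 1/α) : BoxPos α G :=
  ⟨fun i => (h i).1,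
   fun i => (openbox_pos hα0 hα1 (h i).1 (h i).2).1,
   fun i => (openbox_pos hα0 hα1 (h i).1 (h i).2).2⟩

lemma combo_eq_log {G : Fin N → ℝ} (hb : BoxPos α G) (i j k l : Fin N) :
    (phiF α (G i) + phiF α (G j)) - (phiF α (G k) + phiF α (G l))
      = Real.log (G i * G j * Psi α (G k) * Psi α (G l))
        - Real.log (G k * G l * Psi α (G i) * Psi α (G j)) := by
  have p1 := hb.pos i; have p2 := hb.pos j; have p3 := hb.pos k; have p4 := hb.pos l
  have q1 := hb.psi i; have q2 := hb.psi j; have q3 := hb.psi k; have q4 := hb.psi l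
  rw [Real.log_mul (by positivity) (by positivity), Real.log_mul (by positivity) (by positivity),
    Real.log_mul (by positivity) (by positivity), Real.log_mul (by positivity) (by positivity),
    Real.log_mul (by positivity) (by positivity), Real.log_mul (by positivity) (by positivity)]
  unfold phiF; ring

lemma term_nonpos (hnn : ∀ i j k l, 0 ≤ Γ i j k l) {G : Fin N → ℝ} (hb : BoxPos α G)
    (i j k l : Fin N) :
    Γ i j k l * ((phiF α (G i) + phiF α (G j)) - (phiF α (G k) + phiF α (G l)))
      * gq α G i j k l ≤ 0 := by
  have p3 := hb.pos k; have p4 := hb.pos l; have p1 := hb.pos i; have p2 := hb.pos j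
  have q1 := hb.psi i; have q2 := hb.psi j; have q3 := hb.psi k; have q4 := hb.psi l
  rw [mul_assoc, combo_eq_log hb]
  have key : (Real.log (G i * G j * Psi α (G k) * Psi α (G l))
      - Real.log (G k * G l * Psi α (G i) * Psi α (G j))) * gq α G i j k l ≤ 0 := by
    have := log_term_nonpos (a := G k * G l * Psi α (G i) * Psi α (G j))
      (b := G i * G j * Psi α (G k) * Psi α (G l)) (by positivity) (by positivity)
    unfold gq; linarith
  exact mul_nonpos_of_nonneg_of_nonpos (hnn i j k l) key

lemma term_zero_combo (hnn : ∀ i j k l, 0 ≤ Γ i j k l) {G : Fin N → ℝ} (hb : BoxPos α G)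
    (i j k l : Fin N) (hΓne : Γ i j k l ≠ 0)
    (h0 : Γ i j k l * ((phiF α (G i) + phiF α (G j)) - (phiF α (G k) + phiF α (G l)))
      * gq α G i j k l = 0) :
    phiF α (G i) + phiF α (G j) = phiF α (G k) + phiF α (G l) := by
  have p3 := hb.pos k; have p4 := hb.pos l; have p1 := hb.pos i; have p2 := hb.pos j
  have q1 := hb.psi i; have q2 := hb.psi j; have q3 := hb.psi k; have q4 := hb.psi l
  set a := G k * G l * Psi α (G i) * Psi α (G j) with ha
  set b := G i * G j * Psi α (G k) * Psi α (G l) with hbb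
  have hc : (phiF α (G i) + phiF α (G j)) - (phiF α (G k) + phiF α (G l))
      = Real.log b - Real.log a := combo_eq_log hb i j k l
  have hg : gq α G i j k l = a - b := rfl
  have h1 : ((phiF α (G i) + phiF α (G j)) - (phiF α (G k) + phiF α (G l)))
      * gq α G i j k l = 0 := by
    rcases mul_eq_zero.mp h0 with h | h
    · rcases mul_eq_zero.mp h with h' | h'
      · exact absurd h' hΓne
      · rw [h', zero_mul]
    · rw [h, mul_zero]
  have h1' : (Real.log b - Real.log a) * (a - b) = 0 := by rw [← hc, ← hg]; exact h1
  have heq : a = b := log_term_zero (by positivity) (by positivity) h1'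
  have : (phiF α (G i) + phiF α (G j)) - (phiF α (G k) + phiF α (G l)) = 0 := by
    rw [hc, heq, sub_self]
  linarith
end Sign

section DLem
variable {N d : ℕ} {α : ℝ} {Γ : Fin N → Fin N → Fin N → Fin N → ℝ}

lemma sum_collinv_mul_Qop (hs1 : ∀ i j k l, Γ i j k l = Γ j i k l)
    (hs2 : ∀ i j k l, Γ i j k l = Γ k l i j)
    {θ : Fin N → ℝ} (hθ : IsCollInv Γ θ) (G : Fin N → ℝ) :
    ∑ i, θ i * Qop α Γ G i = 0 := by
  have h4 := sym_identity α Γ hs1 hs2 θ G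
  have hz : ∑ i, ∑ j, ∑ k, ∑ l, Γ i j k l * ((θ i + θ j) - (θ k + θ l)) * gq α G i j k l
      = 0 := by
    refine Finset.sum_eq_zero fun i _ => Finset.sum_eq_zero fun j _ =>
      Finset.sum_eq_zero fun k _ => Finset.sum_eq_zero fun l _ => ?_
    by_cases h : Γ i j k l = 0
    · rw [h]; ring
    · have := hθ i j k l h
      have : (θ i + θ j) - (θ k + θ l) = 0 := by linarith
      rw [this]; ring
  rw [hz] at h4; linarith

lemma Dfun_nonneg (hnn : ∀ i j k l, 0 ≤ Γ i j k l)
    (hs1 : ∀ i j k l, Γ i j k l = Γ j i k l)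
    (hs2 : ∀ i j k l, Γ i j k l = Γ k l i j)
    {G : Fin N → ℝ} (hb : BoxPos α G) : 0 ≤ Dfun α Γ G := by
  have h4 := sym_identity α Γ hs1 hs2 (fun i => phiF α (G i)) G
  have hz : ∑ i, ∑ j, ∑ k, ∑ l, Γ i j k l
      * ((phiF α (G i) + phiF α (G j)) - (phiF α (G k) + phiF α (G l))) * gq α G i j k l
      ≤ 0 := by
    refine Finset.sum_nonpos fun i _ => Finset.sum_nonpos fun j _ =>
      Finset.sum_nonpos fun k _ => Finset.sum_nonpos fun l _ => term_nonpos hnn hb i j k l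
  unfold Dfun; linarith

lemma collinv_of_Dfun_zero (hnn : ∀ i j k l, 0 ≤ Γ i j k l)
    (hs1 : ∀ i j k l, Γ i j k l = Γ j i k l)
    (hs2 : ∀ i j k l, Γ i j k l = Γ k l i j)
    {G : Fin N → ℝ} (hb : BoxPos α G) (hD : Dfun α Γ G = 0) :
    IsCollInv Γ (fun i => phiF α (G i)) := by
  have h4 := sym_identity α Γ hs1 hs2 (fun i => phiF α (G i)) G
  have hz : ∑ i, ∑ j, ∑ k, ∑ l, Γ i j k l
      * ((phiF α (G i) + phiF α (G j)) - (phiF α (G k) + phiF α (G l))) * gq α G i j k l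
      = 0 := by
    have : ∑ i, phiF α (G i) * Qop α Γ G i = 0 := by
      unfold Dfun at hD; linarith
    rw [this] at h4; linarith
  intro i j k l hne
  have hterm : ∀ i j k l, Γ i j k l
      * ((phiF α (G i) + phiF α (G j)) - (phiF α (G k) + phiF α (G l))) * gq α G i j k l
      ≤ 0 := fun i j k l => term_nonpos hnn hb i j k l
  -- peel the four sums
  have h1 := (Finset.sum_eq_zero_iff_of_nonpos (fun i _ =>
    Finset.sum_nonpos fun j _ => Finset.sum_nonpos fun k _ =>
      Finset.sum_nonpos fun l _ => hterm i j k l)).mp hz i (Finset.mem_univ i)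
  have h2 := (Finset.sum_eq_zero_iff_of_nonpos (fun j _ =>
    Finset.sum_nonpos fun k _ => Finset.sum_nonpos fun l _ => hterm i j k l)).mp h1 j
      (Finset.mem_univ j)
  have h3 := (Finset.sum_eq_zero_iff_of_nonpos (fun k _ =>
    Finset.sum_nonpos fun l _ => hterm i j k l)).mp h2 k (Finset.mem_univ k)
  have h0 := (Finset.sum_eq_zero_iff_of_nonpos (fun l _ => hterm i j k l)).mp h3 l
      (Finset.mem_univ l)
  exact term_zero_combo hnn hb i j k l hne h0

lemma Dfun_zero_of_collinv (hs1 : ∀ i j k l, Γ i j k l = Γ j i k l)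
    (hs2 : ∀ i j k l, Γ i j k l = Γ k l i j)
    {G : Fin N → ℝ} (hc : IsCollInv Γ (fun i => phiF α (G i))) : Dfun α Γ G = 0 := by
  unfold Dfun
  rw [sum_collinv_mul_Qop hs1 hs2 hc G]
  ring
end DLem

section Equi
variable {N d : ℕ} {α : ℝ} {Γ : Fin N → Fin N → Fin N → Fin N → ℝ} {p : Fin N → Fin d → ℝ}

lemma isEquilib_of_collinv (hα0 : 0 < α) (hα1 : α < 1) (hnorm : IsNormal p Γ)
    {G : Fin N → ℝ} (hop : ∀ i, 0 < G i ∧ G i < 1/α)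
    (hc : IsCollInv Γ (fun i => phiF α (G i))) : IsEquilib α p G := by
  obtain ⟨a, c, b, hrep⟩ := hnorm _ hc
  refine ⟨hop, Real.exp a, fun m => -(b m), -c, Real.exp_pos a, fun i => ?_⟩
  have h2 := (openbox_pos hα0 hα1 (hop i).1 (hop i).2).1
  have h3 := (openbox_pos hα0 hα1 (hop i).1 (hop i).2).2
  rw [← exp_phiF (hop i).1 h2 h3, hrep i, ← Real.exp_add]
  congr 1
  have hsb : ∑ m, -(b m) * p i m = -∑ m, b m * p i m := by
    rw [← Finset.sum_neg_distrib]
    exact Finset.sum_congr rfl fun m _ => by ring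
  rw [hsb]; ring

lemma collinv_of_isEquilib (hα0 : 0 < α) (hα1 : α < 1)
    (hcons : ∀ i j k l, Γ i j k l ≠ 0 →
      (∀ m, p i m + p j m = p k m + p l m) ∧
      (∑ m, (p i m) ^ 2) + (∑ m, (p j m) ^ 2) = (∑ m, (p k m) ^ 2) + (∑ m, (p l m) ^ 2))
    {P : Fin N → ℝ} (hP : IsEquilib α p P) :
    IsCollInv Γ (fun i => phiF α (P i)) := by
  obtain ⟨hop, K, b, c, hK, hrep⟩ := hP
  have hval : ∀ i, phiF α (P i)
      = Real.log K + (-(∑ m, b m * p i m) - c * ∑ m, (p i m) ^ 2) := by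
    intro i
    have h2 := (openbox_pos hα0 hα1 (hop i).1 (hop i).2).1
    have h3 := (openbox_pos hα0 hα1 (hop i).1 (hop i).2).2
    have hψ := Psi_pos h2 h3
    have : phiF α (P i) = Real.log (P i / Psi α (P i)) := by
      rw [phiF, Real.log_div (ne_of_gt (hop i).1) (ne_of_gt hψ)]
    rw [this, hrep i, Real.log_mul (ne_of_gt hK) (Real.exp_ne_zero _), Real.log_exp]
  intro i j k l hne
  obtain ⟨hmom, hen⟩ := hcons i j k l hne
  have hbsum : (∑ m, b m * p i m) + (∑ m, b m * p j m)
      = (∑ m, b m * p k m) + (∑ m, b m * p l m) := by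
    rw [← Finset.sum_add_distrib, ← Finset.sum_add_distrib]
    refine Finset.sum_congr rfl fun m _ => ?_
    linear_combination (b m) * hmom m
  simp only [hval]
  linear_combination (-1 : ℝ) * hbsum + (-c) * hen
end Equi

section Cont
variable {N : ℕ} {α : ℝ} {Γ : Fin N → Fin N → Fin N → Fin N → ℝ}
variable {s : Set (EuclideanSpace ℝ (Fin N))}

/-- positivity pack on a set of states -/
def PosOn (α : ℝ) {N : ℕ} (s : Set (EuclideanSpace ℝ (Fin N))) : Prop :=
  ∀ G ∈ s, ∀ i, 0 < G i ∧ 0 < 1 - α * G i ∧ 0 < 1 + (1 - α) * G i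

lemma contOn_coord (i : Fin N) : ContinuousOn (fun G : EuclideanSpace ℝ (Fin N) => G i) s :=
  (PiLp.continuous_apply 2 (fun _ : Fin N => ℝ) i).continuousOn

lemma contOn_Psi (hs : PosOn α s) (i : Fin N) :
    ContinuousOn (fun G : EuclideanSpace ℝ (Fin N) => Psi α (G i)) s := by
  have c1 : ContinuousOn (fun G : EuclideanSpace ℝ (Fin N) => 1 - α * G i) s :=
    continuousOn_const.sub (continuousOn_const.mul (contOn_coord i))
  have c2 : ContinuousOn (fun G : EuclideanSpace ℝ (Fin N) => 1 + (1 - α) * G i) s :=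
    continuousOn_const.add (continuousOn_const.mul (contOn_coord i))
  exact (c1.rpow_const fun G hG => Or.inl (ne_of_gt (hs G hG i).2.1)).mul
    (c2.rpow_const fun G hG => Or.inl (ne_of_gt (hs G hG i).2.2))

lemma contOn_Qop (hs : PosOn α s) (i : Fin N) :
    ContinuousOn (fun G : EuclideanSpace ℝ (Fin N) => Qop α Γ G i) s := by
  refine continuousOn_finset_sum _ fun j _ => continuousOn_finset_sum _ fun k _ =>
    continuousOn_finset_sum _ fun l _ => continuousOn_const.mul ?_
  exact ((((contOn_coord k).mul (contOn_coord l)).mul (contOn_Psi hs i)).mul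
      (contOn_Psi hs j)).sub
    ((((contOn_coord i).mul (contOn_coord j)).mul (contOn_Psi hs k)).mul (contOn_Psi hs l))

lemma contOn_phiF (hs : PosOn α s) (i : Fin N) :
    ContinuousOn (fun G : EuclideanSpace ℝ (Fin N) => phiF α (G i)) s := by
  unfold phiF
  refine ((contOn_coord i).log fun G hG => ne_of_gt (hs G hG i).1).sub
    ((contOn_Psi hs i).log fun G hG =>
      ne_of_gt (Psi_pos (hs G hG i).2.1 (hs G hG i).2.2))

lemma contOn_Dfun (hs : PosOn α s) :
    ContinuousOn (fun G : EuclideanSpace ℝ (Fin N) => Dfun α Γ G) s := by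
  unfold Dfun
  exact (continuousOn_finset_sum _ fun i _ => (contOn_phiF hs i).mul (contOn_Qop hs i)).neg

lemma isCompact_box {η β : ℝ} :
    IsCompact {G : EuclideanSpace ℝ (Fin N) | ∀ i, η ≤ G i ∧ G i ≤ β} := by
  apply Metric.isCompact_of_isClosed_isBounded
  · have : {G : EuclideanSpace ℝ (Fin N) | ∀ i, η ≤ G i ∧ G i ≤ β}
        = ⋂ i, ((fun G : EuclideanSpace ℝ (Fin N) => G i) ⁻¹' Icc η β) := by
      ext G; simp [Set.mem_iInter, Set.mem_preimage, Set.mem_Icc, forall_and]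
    rw [this]
    exact isClosed_iInter fun i => IsClosed.preimage (PiLp.continuous_apply 2 (fun _ : Fin N => ℝ) i) isClosed_Icc
  · rw [isBounded_iff_forall_norm_le]
    refine ⟨Real.sqrt (N * (max |η| |β|)^2), fun G hG => ?_⟩
    rw [EuclideanSpace.norm_eq]
    apply Real.sqrt_le_sqrt
    have : ∀ i, ‖G i‖^2 ≤ (max |η| |β|)^2 := by
      intro i
      have h1 := (hG i).1; have h2 := (hG i).2
      have : |G i| ≤ max |η| |β| := by
        rw [abs_le]
        constructor
        · calc -(max |η| |β|) ≤ -|η| := by simp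
            _ ≤ η := neg_abs_le η
            _ ≤ G i := h1
        · calc G i ≤ β := h2
            _ ≤ |β| := le_abs_self β
            _ ≤ max |η| |β| := le_max_right _ _
      calc ‖G i‖^2 = |G i|^2 := by rw [Real.norm_eq_abs]
        _ ≤ (max |η| |β|)^2 := by
            apply sq_le_sq' <;> nlinarith [abs_nonneg (G i), this]
    calc (∑ i, ‖G i‖^2) ≤ ∑ _i : Fin N, (max |η| |β|)^2 :=
          Finset.sum_le_sum fun i _ => this i
      _ = N * (max |η| |β|)^2 := by simp [mul_comm]
end Cont

lemma hasDerivAt_muF_s11 {α y : ℝ} (h1 : 0 < y) (h2 : 0 < 1 - α * y) (h3 : 0 < 1 + (1 - α) * y) :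
    HasDerivAt (muF α) (phiF α y) y := by
  have hu : HasDerivAt (fun y : ℝ => 1 - α * y) (-α) y := by
    simpa using ((hasDerivAt_id y).const_mul α).const_sub 1
  have hv : HasDerivAt (fun y : ℝ => 1 + (1 - α) * y) (1 - α) y := by
    simpa using ((hasDerivAt_id y).const_mul (1 - α)).const_add 1
  have H1 : HasDerivAt (fun x : ℝ => x * Real.log x) (Real.log y + 1) y :=
    Real.hasDerivAt_mul_log (ne_of_gt h1)
  have H2 : HasDerivAt (fun x : ℝ => (1 - α * x) * Real.log (1 - α * x))
      ((Real.log (1 - α * y) + 1) * (-α)) y :=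
    by have := (Real.hasDerivAt_mul_log (ne_of_gt h2)).comp y hu; exact this
  have H3 : HasDerivAt (fun x : ℝ => (1 + (1 - α) * x) * Real.log (1 + (1 - α) * x))
      ((Real.log (1 + (1 - α) * y) + 1) * (1 - α)) y :=
    by have := (Real.hasDerivAt_mul_log (ne_of_gt h3)).comp y hv; exact this
  have phieq : phiF α y = Real.log y - α * Real.log (1 - α * y)
      - (1 - α) * Real.log (1 + (1 - α) * y) := by
    unfold phiF Psi
    rw [Real.log_mul (ne_of_gt (Real.rpow_pos_of_pos h2 _)) (ne_of_gt (Real.rpow_pos_of_pos h3 _)),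
      Real.log_rpow h2, Real.log_rpow h3]
    ring
  have := (H1.add H2).sub H3
  rw [show phiF α y = Real.log y + 1 + (Real.log (1 - α * y) + 1) * -α
      - (Real.log (1 + (1 - α) * y) + 1) * (1 - α) by rw [phieq]; ring]
  exact this

/-- entropy decay estimate from a derivative bound -/
lemma decay_le {f D : ℝ → ℝ} {u v c : ℝ} (huv : u ≤ v)
    (hc : ContinuousOn f (Icc u v))
    (hd : ∀ x ∈ Ioo u v, HasDerivAt f (-(D x)) x)
    (hD : ∀ x ∈ Ioo u v, c ≤ D x) : f v ≤ f u - c * (v - u) := by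
  have key : AntitoneOn (fun x => f x + c * x) (Icc u v) := by
    apply antitoneOn_of_deriv_nonpos (convex_Icc u v)
    · exact hc.add (continuousOn_const.mul continuousOn_id)
    · intro x hx
      rw [interior_Icc] at hx
      exact ((hd x hx).add ((hasDerivAt_id x).const_mul c)).differentiableAt.differentiableWithinAt
    · intro x hx
      rw [interior_Icc] at hx
      have : HasDerivAt (fun x => f x + c * x) (-(D x) + c * 1) x :=
        (hd x hx).add ((hasDerivAt_id x).const_mul c)
      rw [this.deriv]
      have := hD x hx; linarith
  have := key (left_mem_Icc.2 huv) (right_mem_Icc.2 huv) huv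
  simp only at this
  linarith

lemma const_of_deriv_zero {f : ℝ → ℝ} {u v : ℝ} (huv : u ≤ v)
    (hc : ContinuousOn f (Icc u v))
    (hd : ∀ x ∈ Ioo u v, HasDerivAt f 0 x) : f v = f u := by
  have h1 : f v ≤ f u - 0 * (v - u) :=
    decay_le huv hc (fun x hx => by simpa using hd x hx) (fun x _ => le_refl 0)
  have h2 : (-f) v ≤ (-f) u - 0 * (v - u) := by
    refine decay_le huv hc.neg (fun x hx => ?_) (fun x _ => le_refl 0)
    simpa using (hd x hx).neg
  simp only [Pi.neg_apply] at h2
  linarith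
set_option maxHeartbeats 1000000 in
/-- trend to equilibrium for the planar stationary system (Theorem 7). -/
theorem stmt11 {N d : ℕ} (hN : 0 < N) (hd : 0 < d)
    (α : ℝ) (hα0 : 0 < α) (hα1 : α < 1)
    (p : Fin N → Fin d → ℝ) (Γ : Fin N → Fin N → Fin N → Fin N → ℝ)
    (hΓ : GammaOK p Γ) (hnorm : IsNormal p Γ)
    (F F' : ℝ → EuclideanSpace ℝ (Fin N))
    (hdiff : ∀ x ∈ Set.Ici (0 : ℝ), HasDerivWithinAt F (F' x) (Set.Ici 0) x)
    (hbdd : ∃ C : ℝ, ∀ x ∈ Set.Ici (0 : ℝ), ‖F x‖ ≤ C)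
    (heq : ∀ x ∈ Set.Ioi (0 : ℝ), ∀ i, p i ⟨0, hd⟩ * F' x i = Qop α Γ (F x) i)
    (η : ℝ) (hη : 0 < η)
    (hbound : ∀ x ∈ Set.Ici (0 : ℝ), ∀ i, η ≤ F x i ∧ F x i ≤ 1 / α - η)
    (Pset : Set (EuclideanSpace ℝ (Fin N)))
    (hPset : Pset = {P : EuclideanSpace ℝ (Fin N) | IsEquilib α p P ∧
      dotN (fun i => p i ⟨0, hd⟩ * 1) P = dotN (fun i => p i ⟨0, hd⟩ * 1) (F 0) ∧
      (∀ m : Fin d, dotN (fun i => p i ⟨0, hd⟩ * p i m) P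
        = dotN (fun i => p i ⟨0, hd⟩ * p i m) (F 0)) ∧
      dotN (fun i => p i ⟨0, hd⟩ * ∑ m, (p i m) ^ 2) P
        = dotN (fun i => p i ⟨0, hd⟩ * ∑ m, (p i m) ^ 2) (F 0)}) :
    Filter.Tendsto (fun x => Metric.infDist (F x) Pset) Filter.atTop (nhds 0) ∧
    (Pset.Finite → ∃ P ∈ Pset, Filter.Tendsto F Filter.atTop (nhds P)) := by
  classical
  obtain ⟨hnn, hs1, hs2, hcons⟩ := hΓ
  set m₀ : Fin d := ⟨0, hd⟩ with hm₀
  set B : Fin N → ℝ := fun i => p i m₀ with hB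
  -- basic facts about F
  have hcoord : ∀ x ∈ Ici (0:ℝ), ∀ i, HasDerivWithinAt (fun y => F y i) (F' x i) (Ici 0) x := by
    intro x hx i
    exact (EuclideanSpace.proj i).hasFDerivAt.comp_hasDerivWithinAt x (hdiff x hx)
  have hcoordAt : ∀ x ∈ Ioi (0:ℝ), ∀ i, HasDerivAt (fun y => F y i) (F' x i) x :=
    fun x hx i => (hcoord x (Set.mem_Ici.2 (le_of_lt hx)) i).hasDerivAt (Ici_mem_nhds hx)
  have hFcont : ContinuousOn F (Ici 0) := fun x hx => (hdiff x hx).continuousWithinAt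
  have hFcoordcont : ∀ i, ContinuousOn (fun y => F y i) (Ici (0:ℝ)) :=
    fun i x hx => (hcoord x hx i).continuousWithinAt
  set Kbox : Set (EuclideanSpace ℝ (Fin N)) := {G | ∀ i, η ≤ G i ∧ G i ≤ 1/α - η} with hKbox
  have hFK : ∀ x ∈ Ici (0:ℝ), F x ∈ Kbox := fun x hx => hbound x hx
  have hKpos : PosOn α Kbox := by
    intro G hG i
    obtain ⟨hy1, hy2⟩ := box_mem_open hα0 hη (hG i).1 (hG i).2
    exact ⟨hy1, (openbox_pos hα0 hα1 hy1 hy2).1, (openbox_pos hα0 hα1 hy1 hy2).2⟩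
  have hKopen : ∀ G ∈ Kbox, ∀ i, 0 < G i ∧ G i < 1/α :=
    fun G hG i => box_mem_open hα0 hη (hG i).1 (hG i).2
  have hKcomp : IsCompact Kbox := isCompact_box
  have hboxOf : ∀ G ∈ Kbox, BoxPos α G := fun G hG =>
    ⟨fun i => (hKpos _ hG i).1, fun i => (hKpos _ hG i).2.1, fun i => (hKpos _ hG i).2.2⟩
  have hboxF : ∀ x ∈ Ici (0:ℝ), BoxPos α (F x) := fun x hx => hboxOf _ (hFK x hx)
  have hZ : ∀ x ∈ Ioi (0:ℝ), ∀ i, B i = 0 → Qop α Γ (F x) i = 0 := by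
    intro x hx i h0
    have h := heq x hx i
    rw [show p i ⟨0, hd⟩ = B i from rfl, h0, zero_mul] at h
    exact h.symm
  -- flux conservation
  have hflux : ∀ θ : Fin N → ℝ, IsCollInv Γ θ → ∀ x ∈ Ici (0:ℝ),
      ∑ i, (B i * θ i) * F x i = ∑ i, (B i * θ i) * F 0 i := by
    intro θ hθ x hx
    rcases eq_or_lt_of_le (Set.mem_Ici.1 hx) with h | h
    · rw [← h]
    · refine const_of_deriv_zero (f := fun y => ∑ i, (B i * θ i) * F y i) (le_of_lt h) ?_ ?_
      · refine ContinuousOn.mono ?_ (fun y hy => hy.1)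
        exact continuousOn_finset_sum _ fun i _ => continuousOn_const.mul (hFcoordcont i)
      · intro y hy
        have hy0 : y ∈ Ioi (0:ℝ) := hy.1
        have hder : HasDerivAt (fun y => ∑ i, (B i * θ i) * F y i)
            (∑ i, (B i * θ i) * F' y i) y :=
          HasDerivAt.fun_sum fun i _ => (hcoordAt y hy0 i).const_mul (B i * θ i)
        have hval : ∑ i, (B i * θ i) * F' y i = ∑ i, θ i * Qop α Γ (F y) i := by
          refine Finset.sum_congr rfl fun i _ => ?_
          have h := heq y hy0 i
          rw [show p i ⟨0, hd⟩ = B i from rfl] at h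
          linear_combination (θ i) * h
        rw [hval, sum_collinv_mul_Qop hs1 hs2 hθ (F y)] at hder
        exact hder
  have hθ1 : IsCollInv Γ (fun _ => (1:ℝ)) := fun i j k l _ => by norm_num
  have hθp : ∀ m, IsCollInv Γ (fun i => p i m) := fun m i j k l hne => (hcons i j k l hne).1 m
  have hθE : IsCollInv Γ (fun i => ∑ m, (p i m)^2) := fun i j k l hne => (hcons i j k l hne).2
  set fluxOK : EuclideanSpace ℝ (Fin N) → Prop := fun G =>
    (dotN (fun i => p i m₀ * 1) G = dotN (fun i => p i m₀ * 1) (F 0) ∧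
    (∀ m : Fin d, dotN (fun i => p i m₀ * p i m) G = dotN (fun i => p i m₀ * p i m) (F 0)) ∧
    dotN (fun i => p i m₀ * ∑ m, (p i m) ^ 2) G
      = dotN (fun i => p i m₀ * ∑ m, (p i m) ^ 2) (F 0)) with hfluxOKdef
  have hfluxF : ∀ x ∈ Ici (0:ℝ), fluxOK (F x) := by
    intro x hx
    refine ⟨?_, fun m => ?_, ?_⟩
    · simpa [dotN] using hflux (fun _ => (1:ℝ)) hθ1 x hx
    · simpa [dotN] using hflux (fun i => p i m) (hθp m) x hx
    · simpa [dotN] using hflux (fun i => ∑ m, (p i m)^2) hθE x hx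
  have hdotcont : ∀ u : Fin N → ℝ, Continuous fun G : EuclideanSpace ℝ (Fin N) => dotN u G :=
    fun u => continuous_finset_sum _ fun i _ => continuous_const.mul (PiLp.continuous_apply 2 (fun _ : Fin N => ℝ) i)
  have hfluxClosed : IsClosed {G : EuclideanSpace ℝ (Fin N) | fluxOK G} := by
    have hset : {G : EuclideanSpace ℝ (Fin N) | fluxOK G} =
        {G : EuclideanSpace ℝ (Fin N) |
            dotN (fun i => p i m₀ * 1) G = dotN (fun i => p i m₀ * 1) (F 0)}
          ∩ ((⋂ m : Fin d, {G : EuclideanSpace ℝ (Fin N) |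
              dotN (fun i => p i m₀ * p i m) G = dotN (fun i => p i m₀ * p i m) (F 0)})
          ∩ {G : EuclideanSpace ℝ (Fin N) |
              dotN (fun i => p i m₀ * ∑ m, (p i m) ^ 2) G
                = dotN (fun i => p i m₀ * ∑ m, (p i m) ^ 2) (F 0)}) := by
      ext G
      simp only [hfluxOKdef, Set.mem_setOf_eq, Set.mem_inter_iff, Set.mem_iInter]
    rw [hset]
    exact (isClosed_eq (hdotcont _) continuous_const).inter
      ((isClosed_iInter fun m => isClosed_eq (hdotcont _) continuous_const).inter
        (isClosed_eq (hdotcont _) continuous_const))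
  -- the compact equilibrium target set
  set Peta : Set (EuclideanSpace ℝ (Fin N)) :=
    {G | G ∈ Kbox ∧ Dfun α Γ G = 0 ∧ fluxOK G} with hPeta
  have hPetaK : Peta ⊆ Kbox := fun G hG => hG.1
  have hPetaClosed : IsClosed Peta := by
    have h1 : Peta = (Kbox ∩ (fun G => Dfun α Γ G) ⁻¹' {0})
        ∩ {G : EuclideanSpace ℝ (Fin N) | fluxOK G} := by
      ext G; simp only [hPeta, Set.mem_setOf_eq, Set.mem_inter_iff, Set.mem_preimage,
        Set.mem_singleton_iff]; tauto
    rw [h1]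
    exact (((contOn_Dfun hKpos).preimage_isClosed_of_isClosed
      hKcomp.isClosed isClosed_singleton)).inter hfluxClosed
  have hPetaCompact : IsCompact Peta := IsCompact.of_isClosed_subset hKcomp hPetaClosed hPetaK
  have hPetaPset : Peta ⊆ Pset := by
    intro G hG
    obtain ⟨hGK, hGD, hGflux⟩ := hG
    have hcoll := collinv_of_Dfun_zero hnn hs1 hs2 (hboxOf G hGK) hGD
    have hEq := isEquilib_of_collinv hα0 hα1 hnorm (hKopen G hGK) hcoll
    rw [hPset]
    exact ⟨hEq, hGflux.1, hGflux.2.1, hGflux.2.2⟩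
  -- membership of equilibria with correct fluxes in Peta
  have hPsetPeta : ∀ G ∈ Pset, G ∈ Kbox → G ∈ Peta := by
    intro G hG hGK
    rw [hPset] at hG
    refine ⟨hGK, ?_, hG.2.1, hG.2.2.1, hG.2.2.2⟩
    exact Dfun_zero_of_collinv hs1 hs2 (collinv_of_isEquilib hα0 hα1 hcons hG.1)
  -- the (★) rigidity lemma
  have hstar : ∀ G ∈ Kbox, (∀ i, B i = 0 → Qop α Γ G i = 0) → ∀ P ∈ Peta,
      (∀ i, B i ≠ 0 → G i = P i) → Dfun α Γ G = 0 := by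
    intro G hGK hGZ P hP hGP
    have hPcoll : IsCollInv Γ (fun i => phiF α (P i)) :=
      collinv_of_Dfun_zero hnn hs1 hs2 (hboxOf P hP.1) hP.2.1
    have hzero : ∑ i, phiF α (P i) * Qop α Γ G i = 0 :=
      sum_collinv_mul_Qop hs1 hs2 hPcoll G
    have hsplit : Dfun α Γ G = -∑ i, (phiF α (G i) - phiF α (P i)) * Qop α Γ G i := by
      unfold Dfun
      rw [show (fun i => (phiF α (G i) - phiF α (P i)) * Qop α Γ G i)
          = fun i => phiF α (G i) * Qop α Γ G i - phiF α (P i) * Qop α Γ G i from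
        funext fun i => by ring]
      rw [Finset.sum_sub_distrib, hzero]
      ring
    rw [hsplit, Finset.sum_eq_zero, neg_zero]
    intro i _
    by_cases h : B i = 0
    · rw [hGZ i h, mul_zero]
    · rw [hGP i h, sub_self, zero_mul]
  -- entropy
  set Hf : ℝ → ℝ := fun x => ∑ i, B i * muF α (F x i) with hHf
  have hmuCont : ContinuousOn (muF α) (Icc η (1/α - η)) := by
    intro y hy
    obtain ⟨h1, h2⟩ := box_mem_open hα0 hη hy.1 hy.2
    obtain ⟨h3, h4⟩ := openbox_pos hα0 hα1 h1 h2
    exact (hasDerivAt_muF_s11 h1 h3 h4).continuousAt.continuousWithinAt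
  have hHcont : ContinuousOn Hf (Ici 0) := by
    refine continuousOn_finset_sum _ fun i _ => continuousOn_const.mul ?_
    exact hmuCont.comp (hFcoordcont i) (fun x hx => ⟨(hbound x hx i).1, (hbound x hx i).2⟩)
  have hHder : ∀ x ∈ Ioi (0:ℝ), HasDerivAt Hf (-(Dfun α Γ (F x))) x := by
    intro x hx
    have hbp := hboxF x (Set.mem_Ici.2 (le_of_lt hx))
    have hsum : HasDerivAt Hf (∑ i, B i * (phiF α (F x i) * F' x i)) x := by
      refine HasDerivAt.fun_sum fun i _ => HasDerivAt.const_mul (B i) ?_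
      exact (hasDerivAt_muF_s11 (hbp.pos i) (hbp.pos2 i) (hbp.pos3 i)).comp x (hcoordAt x hx i)
    have hval : ∑ i, B i * (phiF α (F x i) * F' x i) = -(Dfun α Γ (F x)) := by
      unfold Dfun
      rw [neg_neg]
      refine Finset.sum_congr rfl fun i _ => ?_
      have h := heq x hx i
      rw [show p i ⟨0, hd⟩ = B i from rfl] at h
      linear_combination (phiF α (F x i)) * h
    rw [hval] at hsum
    exact hsum
  have hdecay : ∀ u v : ℝ, ∀ c : ℝ, 0 ≤ u → u ≤ v → (∀ x ∈ Set.Icc u v, c ≤ Dfun α Γ (F x)) →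
      Hf v ≤ Hf u - c*(v-u) := by
    intro u v c h0 huv hD
    refine decay_le huv (hHcont.mono (fun x hx => le_trans h0 hx.1)) (fun x hx => ?_)
      (fun x hx => hD x (Set.Ioo_subset_Icc_self hx))
    exact hHder x (lt_of_le_of_lt h0 hx.1)
  have hHmono : ∀ u v, 0 ≤ u → u ≤ v → Hf v ≤ Hf u := by
    intro u v h0 huv
    have := hdecay u v 0 h0 huv (fun x hx => Dfun_nonneg hnn hs1 hs2
      (hboxF x (le_trans h0 hx.1)))
    linarith
  obtain ⟨CH, hCH⟩ : ∃ CH, ∀ x ∈ Ici (0:ℝ), |Hf x| ≤ CH := by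
    obtain ⟨Cμ, hCμ⟩ := (isCompact_Icc (a := η) (b := 1/α - η)).exists_bound_of_continuousOn
      hmuCont
    refine ⟨∑ i, |B i| * Cμ, fun x hx => ?_⟩
    calc |Hf x| ≤ ∑ i, |B i * muF α (F x i)| := Finset.abs_sum_le_sum_abs _ _
      _ ≤ ∑ i, |B i| * Cμ := by
          refine Finset.sum_le_sum fun i _ => ?_
          rw [abs_mul]
          refine mul_le_mul_of_nonneg_left ?_ (abs_nonneg _)
          have := hCμ (F x i) ⟨(hbound x hx i).1, (hbound x hx i).2⟩
          simpa using this
  -- bounds on Q and Lipschitz estimates for the moving coordinates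
  obtain ⟨CQ, hCQ⟩ : ∃ CQ : Fin N → ℝ, ∀ i, (0 ≤ CQ i) ∧ ∀ G ∈ Kbox, |Qop α Γ G i| ≤ CQ i := by
    have h : ∀ i : Fin N, ∃ C : ℝ, (0 ≤ C) ∧ ∀ G ∈ Kbox, |Qop α Γ G i| ≤ C := by
      intro i
      obtain ⟨C, hC⟩ := hKcomp.exists_bound_of_continuousOn (contOn_Qop hKpos i)
      refine ⟨C, ?_, fun G hG => by simpa using hC G hG⟩
      have := hC (F 0) (hFK 0 Set.self_mem_Ici)
      exact le_trans (norm_nonneg _) this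
    choose CQ hCQ using h
    exact ⟨CQ, hCQ⟩
  have hLip : ∀ i, B i ≠ 0 → ∀ x ∈ Ioi (0:ℝ), ∀ y ∈ Ioi (0:ℝ),
      |F x i - F y i| ≤ (CQ i / |B i|) * |x - y| := by
    intro i hBi x hxI y hyI
    have hBpos : 0 < |B i| := abs_pos.2 hBi
    have key := Convex.norm_image_sub_le_of_norm_hasDerivWithin_le
      (f := fun y => F y i) (f' := fun y => F' y i) (C := CQ i / |B i|) (s := Ioi (0:ℝ))
      (fun z hz => (hcoord z (Set.mem_Ici.2 (le_of_lt hz)) i).mono (fun w hw => Set.mem_Ici.2 (le_of_lt hw)))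
      (fun z hz => ?_) (convex_Ioi 0) hyI hxI
    · simpa [Real.norm_eq_abs] using key
    · have h := heq z hz i
      rw [show p i ⟨0, hd⟩ = B i from rfl] at h
      have hF' : F' z i = Qop α Γ (F z) i / B i := by
        rw [eq_div_iff hBi]; linear_combination h
      have hb : |F' z i| ≤ CQ i / |B i| := by
        rw [hF', abs_div]
        gcongr
        exact (hCQ i).2 (F z) (hFK z (Set.mem_Ici.2 (le_of_lt hz)))
      simpa [Real.norm_eq_abs] using hb
  -- S-distance
  set w : Fin N → ℝ := fun i => if B i = 0 then 0 else 1 with hw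
  have hw0 : ∀ i, 0 ≤ w i := fun i => by rw [hw]; dsimp only; split <;> norm_num
  set dS : EuclideanSpace ℝ (Fin N) → EuclideanSpace ℝ (Fin N) → ℝ :=
    fun G P => ∑ i, w i * |G i - P i| with hdS
  have hdSnn : ∀ G P, 0 ≤ dS G P := fun G P =>
    Finset.sum_nonneg fun i _ => mul_nonneg (hw0 i) (abs_nonneg _)
  have hdStri : ∀ G G' P, dS G P ≤ dS G' P + ∑ i, w i * |G i - G' i| := by
    intro G G' P
    rw [hdS]
    dsimp only
    rw [← Finset.sum_add_distrib]
    refine Finset.sum_le_sum fun i _ => ?_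
    have htri : |G i - P i| ≤ |G' i - P i| + |G i - G' i| := by
      have := abs_sub_le (G i) (G' i) (P i)
      have h2 : |G i - G' i| + |G' i - P i| = |G' i - P i| + |G i - G' i| := by ring
      linarith
    nlinarith [hw0 i, abs_nonneg (G i - P i), abs_nonneg (G' i - P i), abs_nonneg (G i - G' i)]
  have hdScont : Continuous fun q : EuclideanSpace ℝ (Fin N) × EuclideanSpace ℝ (Fin N) =>
      dS q.1 q.2 := by
    refine continuous_finset_sum _ fun i _ => continuous_const.mul ?_
    exact (((PiLp.continuous_apply 2 (fun _ : Fin N => ℝ) i).comp continuous_fst).sub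
      ((PiLp.continuous_apply 2 (fun _ : Fin N => ℝ) i).comp continuous_snd)).abs
  -- nonemptiness of Peta
  have hfluxLimKey : ∀ (g : ℕ → ℝ) (P : EuclideanSpace ℝ (Fin N)),
      (∀ n, 0 ≤ g n) → Filter.Tendsto (fun n => F (g n)) Filter.atTop (nhds P) →
      fluxOK P := by
    intro g P hg hconv
    have key : ∀ u : Fin N → ℝ, (∀ x ∈ Ici (0:ℝ), dotN u (F x) = dotN u (F 0)) →
        dotN u P = dotN u (F 0) := by
      intro u hu
      have ht : Filter.Tendsto (fun n => dotN u (F (g n))) Filter.atTop (nhds (dotN u P)) :=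
        ((hdotcont u).tendsto P).comp hconv
      have hconst : (fun n => dotN u (F (g n))) = fun _ => dotN u (F 0) :=
        funext fun n => hu _ (hg n)
      rw [hconst] at ht
      exact tendsto_nhds_unique ht tendsto_const_nhds
    exact ⟨key _ (fun x hx => (hfluxF x hx).1), fun m => key _ (fun x hx => (hfluxF x hx).2.1 m),
      key _ (fun x hx => (hfluxF x hx).2.2)⟩
  have hinv : Filter.Tendsto (fun k : ℕ => 1/((k:ℝ)+1)) Filter.atTop (nhds 0) :=
    tendsto_one_div_add_atTop_nhds_zero_nat
  have hPetaNe : Peta.Nonempty := by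
    have hsmall : ∀ n : ℕ, ∃ x : ℝ, ((n:ℝ) ≤ x) ∧ Dfun α Γ (F x) < 1/((n:ℝ)+1) := by
      intro n
      by_contra hcon
      push_neg at hcon
      obtain ⟨m, hm⟩ := exists_nat_gt ((2*CH + 1)*((n:ℝ)+1))
      have hmn : (0:ℝ) < (n:ℝ)+1 := by positivity
      have hdec := hdecay (n:ℝ) ((n:ℝ)+(m:ℝ)) (1/((n:ℝ)+1)) (Nat.cast_nonneg n)
        (by linarith [Nat.cast_nonneg (α := ℝ) m]) ?_
      · have h1 := hCH ((n:ℝ)+(m:ℝ)) (Set.mem_Ici.2 (by positivity))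
        have h2 := hCH (n:ℝ) (Set.mem_Ici.2 (Nat.cast_nonneg n))
        have h3 : (1/((n:ℝ)+1)) * ((n:ℝ)+(m:ℝ)-(n:ℝ)) = (m:ℝ)/((n:ℝ)+1) := by ring
        have h4 : (2*CH + 1) < (m:ℝ)/((n:ℝ)+1) := by
          rw [lt_div_iff₀ hmn]; linarith
        have h5 := abs_le.1 h1
        have h6 := abs_le.1 h2
        have hCHnn : 0 ≤ CH := le_trans (abs_nonneg _) h2
        linarith [hdec, h3 ▸ hdec]
      · intro x hx
        exact hcon x (le_trans (le_refl _) hx.1)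
    choose xs hxs using hsmall
    have hxsmem : ∀ n, xs n ∈ Ici (0:ℝ) := fun n => le_trans (Nat.cast_nonneg n) (hxs n).1
    obtain ⟨P, hPK, φ, hφmono, hconv⟩ := hKcomp.tendsto_subseq
      (x := fun n => F (xs n)) (fun n => hFK (xs n) (hxsmem n))
    have hDlim : Filter.Tendsto (fun k => Dfun α Γ (F (xs (φ k)))) Filter.atTop
        (nhds (Dfun α Γ P)) :=
      ((contOn_Dfun hKpos) P hPK).tendsto.comp
        (tendsto_nhdsWithin_iff.2 ⟨hconv, Filter.Eventually.of_forall
          fun k => hFK (xs (φ k)) (hxsmem (φ k))⟩)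
    have hDP0 : Dfun α Γ P = 0 := by
      have h1 : Dfun α Γ P ≤ 0 := by
        refine le_of_tendsto_of_tendsto hDlim hinv (Filter.Eventually.of_forall fun k => ?_)
        have hb := (hxs (φ k)).2
        have : (1:ℝ)/((φ k : ℝ)+1) ≤ 1/((k:ℝ)+1) := by
          have : (k:ℝ) ≤ (φ k : ℝ) := by exact_mod_cast hφmono.le_apply
          apply one_div_le_one_div_of_le (by positivity) (by linarith)
        exact le_of_lt (lt_of_lt_of_le hb this)
      have h2 : 0 ≤ Dfun α Γ P := Dfun_nonneg hnn hs1 hs2 (hboxOf P hPK)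
      linarith
    exact ⟨P, hPK, hDP0, hfluxLimKey (fun k => xs (φ k)) P (fun k => hxsmem (φ k)) hconv⟩
  -- the excursion estimate: a uniform entropy drop
  have hdScont1 : ∀ P : EuclideanSpace ℝ (Fin N), Continuous fun G => dS G P := by
    intro P
    refine continuous_finset_sum _ fun i _ => continuous_const.mul ?_
    exact ((PiLp.continuous_apply 2 (fun _ : Fin N => ℝ) i).sub continuous_const).abs
  have hdSself : ∀ G, dS G G = 0 := by
    intro G
    rw [hdS]
    refine Finset.sum_eq_zero fun i _ => by simp
  have hdrop : ∀ ε > 0, ∃ γ > 0, ∀ u ≥ (1:ℝ),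
      (ε ≤ Metric.infDist (F u) Peta) → ∃ v ≥ u, Hf v ≤ Hf u - γ := by
    intro ε hε
    -- CLAIM A
    obtain ⟨δ, hδpos, hA⟩ : ∃ δ > 0, ∀ G ∈ Kbox, (∀ i, B i = 0 → Qop α Γ G i = 0) →
        fluxOK G → ε ≤ Metric.infDist G Peta → ∀ P ∈ Peta, δ ≤ dS G P := by
      by_contra hcon
      push_neg at hcon
      have hsel : ∀ n : ℕ, ∃ GP : (EuclideanSpace ℝ (Fin N)) × (EuclideanSpace ℝ (Fin N)),
          GP.1 ∈ Kbox ∧ (∀ i, B i = 0 → Qop α Γ GP.1 i = 0) ∧ fluxOK GP.1 ∧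
          ε ≤ Metric.infDist GP.1 Peta ∧ GP.2 ∈ Peta ∧ dS GP.1 GP.2 < 1/((n:ℝ)+1) := by
        intro n
        obtain ⟨G, hGK, hGZ', hGf, hGd, P, hPP, hdSP⟩ := hcon (1/((n:ℝ)+1)) (by positivity)
        exact ⟨(G, P), hGK, hGZ', hGf, hGd, hPP, hdSP⟩
      choose GP hGsK hGsZ hGsf hGsd hPsP hPsd using hsel
      set Gs : ℕ → EuclideanSpace ℝ (Fin N) := fun n => (GP n).1 with hGs
      set Ps : ℕ → EuclideanSpace ℝ (Fin N) := fun n => (GP n).2 with hPs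
      obtain ⟨Gl, hGlK, φ1, hφ1, hGconv⟩ := hKcomp.tendsto_subseq hGsK
      obtain ⟨Pl, hPlP, φ2, hφ2, hPconv⟩ := hPetaCompact.tendsto_subseq
        (x := fun k => Ps (φ1 k)) (fun k => hPsP (φ1 k))
      set ψ : ℕ → ℕ := φ1 ∘ φ2 with hψ
      have hψmono : StrictMono ψ := hφ1.comp hφ2
      have hGconv2 : Filter.Tendsto (fun k => Gs (ψ k)) Filter.atTop (nhds Gl) :=
        hGconv.comp hφ2.tendsto_atTop
      -- limit is in Kbox, satisfies constraints
      have hQl : ∀ i, B i = 0 → Qop α Γ Gl i = 0 := by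
        intro i h0
        have ht : Filter.Tendsto (fun k => Qop α Γ (Gs (ψ k)) i) Filter.atTop
            (nhds (Qop α Γ Gl i)) :=
          ((contOn_Qop hKpos i) Gl hGlK).tendsto.comp
            (tendsto_nhdsWithin_iff.2 ⟨hGconv2, Filter.Eventually.of_forall
              fun k => hGsK (ψ k)⟩)
        have hconst : (fun k => Qop α Γ (Gs (ψ k)) i) = fun _ => 0 :=
          funext fun k => hGsZ (ψ k) i h0
        rw [hconst] at ht
        exact tendsto_nhds_unique ht tendsto_const_nhds
      have hfluxl : fluxOK Gl := by
        have key : ∀ u : Fin N → ℝ, ∀ cst : ℝ, (∀ n, dotN u (Gs n) = cst) →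
            dotN u Gl = cst := by
          intro u cst hc
          have ht : Filter.Tendsto (fun k => dotN u (Gs (ψ k))) Filter.atTop
              (nhds (dotN u Gl)) := ((hdotcont u).tendsto Gl).comp hGconv2
          have hcc : (fun k => dotN u (Gs (ψ k))) = fun _ => cst := funext fun k => hc (ψ k)
          rw [hcc] at ht
          exact tendsto_nhds_unique ht tendsto_const_nhds
        exact ⟨key _ _ (fun n => (hGsf n).1), fun m => key _ _ (fun n => (hGsf n).2.1 m),
          key _ _ (fun n => (hGsf n).2.2)⟩
      have hdl : ε ≤ Metric.infDist Gl Peta := by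
        have ht : Filter.Tendsto (fun k => Metric.infDist (Gs (ψ k)) Peta) Filter.atTop
            (nhds (Metric.infDist Gl Peta)) :=
          ((Metric.continuous_infDist_pt Peta).tendsto Gl).comp hGconv2
        exact ge_of_tendsto ht (Filter.Eventually.of_forall fun k => hGsd (ψ k))
      have hdS0 : dS Gl Pl = 0 := by
        have hpair : Filter.Tendsto (fun k => (Gs (ψ k), Ps (φ1 (φ2 k)))) Filter.atTop
            (nhds (Gl, Pl)) := hGconv2.prodMk_nhds hPconv
        have ht : Filter.Tendsto (fun k => dS (Gs (ψ k)) (Ps (φ1 (φ2 k)))) Filter.atTop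
            (nhds (dS Gl Pl)) := (hdScont.tendsto (Gl, Pl)).comp hpair
        have h1 : dS Gl Pl ≤ 0 := by
          refine le_of_tendsto_of_tendsto ht hinv (Filter.Eventually.of_forall fun k => ?_)
          have hb := hPsd (ψ k)
          have hk : (k:ℝ) ≤ (ψ k : ℝ) := by exact_mod_cast hψmono.le_apply
          have : (1:ℝ)/((ψ k : ℝ)+1) ≤ 1/((k:ℝ)+1) :=
            one_div_le_one_div_of_le (by positivity) (by linarith)
          exact le_of_lt (lt_of_lt_of_le hb this)
        linarith [hdSnn Gl Pl]
      have hcoords : ∀ i, B i ≠ 0 → Gl i = Pl i := by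
        intro i hBi
        have := (Finset.sum_eq_zero_iff_of_nonneg
          (fun i _ => mul_nonneg (hw0 i) (abs_nonneg (Gl i - Pl i)))).1 hdS0 i
          (Finset.mem_univ i)
        rw [hw] at this
        simp only [hBi, if_false] at this
        have : |Gl i - Pl i| = 0 := by linarith [this]
        have := abs_eq_zero.1 this
        linarith [this]
      have hDGl : Dfun α Γ Gl = 0 := hstar Gl hGlK hQl Pl hPlP hcoords
      have hGlPeta : Gl ∈ Peta := ⟨hGlK, hDGl, hfluxl⟩
      have := Metric.infDist_zero_of_mem hGlPeta
      rw [this] at hdl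
      linarith
    -- CLAIM B
    obtain ⟨c, hcpos, hBc⟩ : ∃ c > 0, ∀ G ∈ Kbox, fluxOK G →
        (∀ P ∈ Peta, δ/2 ≤ dS G P) → c ≤ Dfun α Γ G := by
      set Y : Set (EuclideanSpace ℝ (Fin N)) :=
        {G | G ∈ Kbox ∧ fluxOK G ∧ ∀ P ∈ Peta, δ/2 ≤ dS G P} with hY
      have hYclosed : IsClosed Y := by
        have hYeq : Y = (Kbox ∩ {G | fluxOK G}) ∩ ⋂ P ∈ Peta, {G | δ/2 ≤ dS G P} := by
          ext G
          simp only [hY, Set.mem_setOf_eq, Set.mem_inter_iff, Set.mem_iInter]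
          tauto
        rw [hYeq]
        refine ((hKcomp.isClosed.inter hfluxClosed)).inter
          (isClosed_biInter fun P _ => ?_)
        exact isClosed_le continuous_const (hdScont1 P)
      have hYK : Y ⊆ Kbox := fun G hG => hG.1
      have hYcomp : IsCompact Y := IsCompact.of_isClosed_subset hKcomp hYclosed hYK
      rcases Set.eq_empty_or_nonempty Y with hE | hNe
      · refine ⟨1, one_pos, fun G hGK hGf hGd => ?_⟩
        exact absurd (show G ∈ Y from ⟨hGK, hGf, hGd⟩) (by rw [hE]; exact Set.notMem_empty G)
      · obtain ⟨G₀, hG₀Y, hmin⟩ := hYcomp.exists_isMinOn hNe ((contOn_Dfun hKpos).mono hYK)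
        have hD₀pos : 0 < Dfun α Γ G₀ := by
          rcases lt_or_eq_of_le (Dfun_nonneg hnn hs1 hs2 (hboxOf G₀ (hYK hG₀Y))) with h | h
          · exact h
          · exfalso
            have hG₀Peta : G₀ ∈ Peta := ⟨hYK hG₀Y, h.symm, hG₀Y.2.1⟩
            have := hG₀Y.2.2 G₀ hG₀Peta
            rw [hdSself G₀] at this
            linarith
        exact ⟨Dfun α Γ G₀, hD₀pos, fun G hGK hGf hGd => hmin ⟨hGK, hGf, hGd⟩⟩
    -- assemble: excursion of definite entropy cost
    set L : Fin N → ℝ := fun i => if B i = 0 then 0 else CQ i / |B i| with hL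
    have hLnn : ∀ i, 0 ≤ L i := by
      intro i
      rw [hL]
      dsimp only
      split
      · exact le_refl 0
      · exact div_nonneg (hCQ i).1 (abs_nonneg _)
    set Mtot : ℝ := (∑ i, L i) + 1 with hM
    have hMpos : 0 < Mtot := by
      rw [hM]
      have : 0 ≤ ∑ i, L i := Finset.sum_nonneg fun i _ => hLnn i
      linarith
    set τ : ℝ := δ/(2*Mtot) with hτ
    have hτpos : 0 < τ := by rw [hτ]; positivity
    refine ⟨c * τ, by positivity, fun u hu hdist => ⟨u + τ, by linarith, ?_⟩⟩
    have hDbig : ∀ x ∈ Set.Icc u (u+τ), c ≤ Dfun α Γ (F x) := by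
      intro x hx
      have hx0 : (0:ℝ) < x := by linarith [hx.1]
      have hu0 : (0:ℝ) < u := by linarith
      refine hBc (F x) (hFK x (le_of_lt hx0)) (hfluxF x (le_of_lt hx0)) ?_
      intro P hP
      have h1 : δ ≤ dS (F u) P :=
        hA (F u) (hFK u (le_of_lt hu0)) (hZ u hu0) (hfluxF u (le_of_lt hu0)) hdist P hP
      have h2 : dS (F u) P ≤ dS (F x) P + ∑ i, w i * |F u i - F x i| := hdStri (F u) (F x) P
      have h3 : ∑ i, w i * |F u i - F x i| ≤ δ/2 := by
        have hpt : ∀ i, w i * |F u i - F x i| ≤ L i * τ := by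
          intro i
          by_cases hBi : B i = 0
          · rw [hw, hL]; simp only [hBi, if_true]; simp
          · rw [hw, hL]
            simp only [hBi, if_false, one_mul]
            have := hLip i hBi u hu0 x hx0
            have habs : |u - x| ≤ τ := by
              rw [abs_le]; constructor <;> [linarith [hx.2]; linarith [hx.1]]
            calc |F u i - F x i| ≤ (CQ i / |B i|) * |u - x| := this
              _ ≤ (CQ i / |B i|) * τ := by
                  exact mul_le_mul_of_nonneg_left habs
                    (div_nonneg (hCQ i).1 (abs_nonneg _))
        calc ∑ i, w i * |F u i - F x i| ≤ ∑ i, L i * τ := Finset.sum_le_sum fun i _ => hpt i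
          _ = (∑ i, L i) * τ := by rw [Finset.sum_mul]
          _ ≤ Mtot * τ := by
              refine mul_le_mul_of_nonneg_right ?_ (le_of_lt hτpos)
              rw [hM]; linarith
          _ = δ/2 := by rw [hτ]; field_simp
      linarith
    have := hdecay u (u+τ) c (by linarith) (by linarith) hDbig
    have heq2 : c * (u + τ - u) = c * τ := by ring
    linarith [heq2 ▸ this]
  -- PART 1
  have hPart1aux : ∀ ε > (0:ℝ), ∃ T : ℝ, ∀ x ≥ T, Metric.infDist (F x) Pset < ε := by
    intro ε hε
    by_contra hcon
    push_neg at hcon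
    obtain ⟨γ, hγ, hdropε⟩ := hdrop ε hε
    have hiter : ∀ n : ℕ, ∃ v ≥ (1:ℝ), Hf v ≤ Hf 1 - n * γ := by
      intro n
      induction n with
      | zero => exact ⟨1, le_refl 1, by simp⟩
      | succ n ih =>
        obtain ⟨v, hv1, hvH⟩ := ih
        obtain ⟨x₀, hx₀v, hx₀d⟩ := hcon v
        have hx₀1 : (1:ℝ) ≤ x₀ := le_trans hv1 hx₀v
        have hd2 : ε ≤ Metric.infDist (F x₀) Peta :=
          le_trans hx₀d (Metric.infDist_le_infDist_of_subset hPetaPset hPetaNe)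
        obtain ⟨v', hv'x₀, hv'H⟩ := hdropε x₀ hx₀1 hd2
        refine ⟨v', le_trans hx₀1 hv'x₀, ?_⟩
        have hmono := hHmono v x₀ (by linarith) hx₀v
        push_cast
        linarith
    obtain ⟨n, hn⟩ := exists_nat_gt ((2*CH)/γ)
    obtain ⟨v, hv1, hvH⟩ := hiter n
    have h1 := hCH v (Set.mem_Ici.2 (by linarith))
    have h2 := hCH 1 (Set.mem_Ici.2 (by norm_num))
    have hnγ : 2*CH < n * γ := by
      rw [div_lt_iff₀ hγ] at hn
      linarith
    have h5 := abs_le.1 h1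
    have h6 := abs_le.1 h2
    linarith
  have part1 : Filter.Tendsto (fun x => Metric.infDist (F x) Pset) Filter.atTop (nhds 0) := by
    rw [Metric.tendsto_atTop]
    intro ε hε
    obtain ⟨T, hT⟩ := hPart1aux ε hε
    refine ⟨T, fun x hx => ?_⟩
    rw [Real.dist_eq, sub_zero, abs_of_nonneg Metric.infDist_nonneg]
    exact hT x hx
  refine ⟨part1, ?_⟩
  -- PART 2
  intro hfin
  obtain ⟨Pstar, hPstarPeta⟩ := hPetaNe
  have hPstar : Pstar ∈ Pset := hPetaPset hPstarPeta
  have hPsetNe : Pset.Nonempty := ⟨Pstar, hPstar⟩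
  have hattain : ∀ x : ℝ, ∀ r : ℝ, Metric.infDist (F x) Pset < r →
      ∃ P ∈ Pset, dist (F x) P < r := by
    intro x r hx
    exact (Metric.infDist_lt_iff hPsetNe).1 hx
  by_cases hsub : ∀ P ∈ Pset, ∀ P' ∈ Pset, P = P'
  · -- singleton case
    have hsingle : Pset = {Pstar} := by
      ext P
      constructor
      · intro hP; exact hsub P hP Pstar hPstar
      · intro hP; rw [hP]; exact hPstar
    refine ⟨Pstar, hPstar, ?_⟩
    rw [tendsto_iff_dist_tendsto_zero]
    have : (fun x => dist (F x) Pstar) = fun x => Metric.infDist (F x) Pset := by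
      funext x; rw [hsingle, Metric.infDist_singleton]
    rw [this]
    exact part1
  · push_neg at hsub
    obtain ⟨Pa, hPa, Pb, hPb, hPab⟩ := hsub
    -- minimal separation
    obtain ⟨r, hrpos, hsep⟩ : ∃ r > (0:ℝ), ∀ P ∈ Pset, ∀ P' ∈ Pset, P ≠ P' →
        3*r ≤ dist P P' := by
      classical
      set PF := hfin.toFinset with hPF
      set pairs := (PF ×ˢ PF).filter (fun q => q.1 ≠ q.2) with hpairs
      have hmemab : (Pa, Pb) ∈ pairs := by
        rw [hpairs, Finset.mem_filter, Finset.mem_product]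
        exact ⟨⟨hfin.mem_toFinset.2 hPa, hfin.mem_toFinset.2 hPb⟩, hPab⟩
      obtain ⟨q₀, hq₀mem, hq₀min⟩ := Finset.exists_min_image pairs
        (fun q => dist q.1 q.2) ⟨(Pa, Pb), hmemab⟩
      have hq₀ne : q₀.1 ≠ q₀.2 := (Finset.mem_filter.1 hq₀mem).2
      have hq₀pos : 0 < dist q₀.1 q₀.2 := dist_pos.2 hq₀ne
      refine ⟨dist q₀.1 q₀.2 / 3, by positivity, ?_⟩
      intro P hP P' hP' hne
      have hmem : (P, P') ∈ pairs := by
        rw [hpairs, Finset.mem_filter, Finset.mem_product]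
        exact ⟨⟨hfin.mem_toFinset.2 hP, hfin.mem_toFinset.2 hP'⟩, hne⟩
      have := hq₀min (P, P') hmem
      simp only at this
      linarith
    obtain ⟨T₀, hT₀⟩ := hPart1aux r hrpos
    set T' : ℝ := max T₀ 0 with hT'
    have hT'0 : (0:ℝ) ≤ T' := le_max_right _ _
    have hT'lt : ∀ x ≥ T', Metric.infDist (F x) Pset < r :=
      fun x hx => hT₀ x (le_trans (le_max_left _ _) hx)
    obtain ⟨P₀, hP₀Pset, hP₀near⟩ := hattain T' r (hT'lt T' (le_refl T'))
    have hball : ∀ x ≥ T', dist (F x) P₀ < r := by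
      by_contra hcon2
      push_neg at hcon2
      obtain ⟨x₁, hx₁T, hx₁d⟩ := hcon2
      have hcd : ContinuousOn (fun x => dist (F x) P₀) (Set.Icc T' x₁) := by
        have hsub : Set.Icc T' x₁ ⊆ Set.Ici (0:ℝ) := fun y hy => le_trans hT'0 hy.1
        exact (continuous_id.dist continuous_const).comp_continuousOn (hFcont.mono hsub)
      have hrmem : r ∈ Set.Icc (dist (F T') P₀) (dist (F x₁) P₀) :=
        ⟨le_of_lt hP₀near, hx₁d⟩
      obtain ⟨x₂, hx₂Icc, hx₂eq⟩ := intermediate_value_Icc hx₁T hcd hrmem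
      obtain ⟨P₁, hP₁Pset, hP₁near⟩ := hattain x₂ r (hT'lt x₂ hx₂Icc.1)
      have hP₁ne : P₁ ≠ P₀ := by
        intro he
        rw [he] at hP₁near
        simp only at hx₂eq
        rw [hx₂eq] at hP₁near
        exact lt_irrefl r hP₁near
      have hsep' := hsep P₁ hP₁Pset P₀ hP₀Pset hP₁ne
      have htr := dist_triangle P₁ (F x₂) P₀
      rw [dist_comm P₁ (F x₂)] at htr
      simp only at hx₂eq
      rw [hx₂eq] at htr
      linarith
    refine ⟨P₀, hP₀Pset, ?_⟩
    rw [tendsto_iff_dist_tendsto_zero, Metric.tendsto_atTop]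
    intro ε' hε'
    obtain ⟨T₂, hT₂⟩ := hPart1aux (min ε' r) (lt_min hε' hrpos)
    refine ⟨max T₂ T', fun x hx => ?_⟩
    have hxT₂ : T₂ ≤ x := le_trans (le_max_left _ _) hx
    have hxT' : T' ≤ x := le_trans (le_max_right _ _) hx
    obtain ⟨P₂, hP₂Pset, hP₂near⟩ := hattain x (min ε' r) (hT₂ x hxT₂)
    have hP₂eq : P₂ = P₀ := by
      by_contra hne
      have := hsep P₂ hP₂Pset P₀ hP₀Pset hne
      have htr := dist_triangle P₂ (F x) P₀
      rw [dist_comm P₂ (F x)] at htr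
      have h1 : dist (F x) P₂ < r := lt_of_lt_of_le hP₂near (min_le_right _ _)
      have h2 := hball x hxT'
      linarith
    rw [hP₂eq] at hP₂near
    rw [Real.dist_eq, sub_zero, abs_of_nonneg dist_nonneg]
    exact lt_of_lt_of_le hP₂near (min_le_left _ _)
end

section
/- The linearized collision operator L (an N×N matrix) is symmetric and positive semi-definite: for all f, g ∈ ℝ^N, ⟨g, Lf⟩ = ⟨Lg, f⟩ and ⟨f, Lf⟩ ≥ 0. -/
open Real Finset Filter Set

lemma collapse4 {N : ℕ} (G : Fin N → Fin N → Fin N → Fin N → ℝ) :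
    (∑ i, ∑ j, ∑ k, ∑ l, G i j k l)
      = ∑ x : (Fin N × Fin N) × (Fin N × Fin N), G x.1.1 x.1.2 x.2.1 x.2.2 := by
  simp [Fintype.sum_prod_type]

lemma alg1 (γ A si sj sk sl gi fi fj fk fl : ℝ) (hi : si ≠ 0) (hj : sj ≠ 0)
    (hk : sk ≠ 0) (hl : sl ≠ 0) :
    gi * (γ / si * (A / si * fi + A / sj * fj - A / sk * fk - A / sl * fl))
      = γ * A * (gi / si) * (fi / si + fj / sj - fk / sk - fl / sl) := by
  field_simp
/-- Proposition: the linearized collision operator is symmetric and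
positive semi-definite. -/
theorem stmt18 {N d : ℕ} (hN : 0 < N) (hd : 0 < d)
    (α : ℝ) (hα0 : 0 < α) (hα1 : α < 1)
    (p : Fin N → Fin d → ℝ) (Γ : Fin N → Fin N → Fin N → Fin N → ℝ)
    (hΓ : GammaOK p Γ)
    (P : Fin N → ℝ) (hP : IsEquilib α p P) :
    ∀ f g : Fin N → ℝ,
      dotN g (Lop α Γ P f) = dotN (Lop α Γ P g) f ∧
      0 ≤ dotN f (Lop α Γ P f) := by

  obtain ⟨hΓ0, hΓs1, hΓs2, hΓc⟩ := hΓ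
  obtain ⟨hPpos, K, b, c, hK, hPeq⟩ := hP
  -- positivity facts
  have h1 : ∀ i, 0 < 1 - α * P i := by
    intro i
    have := (lt_div_iff₀ hα0).mp ((hPpos i).2)
    nlinarith
  have h2 : ∀ i, 0 < 1 + (1 - α) * P i := by
    intro i; have := (hPpos i).1; nlinarith
  have hψ : ∀ i, 0 < Psi α (P i) := fun i =>
    mul_pos (Real.rpow_pos_of_pos (h1 i) _) (Real.rpow_pos_of_pos (h2 i) _)
  have hR : ∀ i, 0 < Rfun α P i := fun i =>
    mul_pos (mul_pos (hPpos i).1 (h1 i)) (h2 i)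
  have hs : ∀ i, Real.sqrt (Rfun α P i) ≠ 0 := fun i => (Real.sqrt_pos.mpr (hR i)).ne'
  -- detailed balance
  set E : Fin N → ℝ := fun i => -(∑ m, b m * p i m) - c * ∑ m, (p i m) ^ 2 with hEdef
  have hPform : ∀ i, P i = K * Real.exp (E i) * Psi α (P i) := by
    intro i
    have h := hPeq i
    rw [div_eq_iff (hψ i).ne'] at h
    exact h
  have hbal : ∀ i j k l, Γ i j k l ≠ 0 →
      P i * P j * Psi α (P k) * Psi α (P l) = P k * P l * Psi α (P i) * Psi α (P j) := by
    intro i j k l h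
    obtain ⟨hm, he⟩ := hΓc i j k l h
    have hb : (∑ m, b m * p i m) + (∑ m, b m * p j m)
        = (∑ m, b m * p k m) + (∑ m, b m * p l m) := by
      rw [← Finset.sum_add_distrib, ← Finset.sum_add_distrib]
      exact Finset.sum_congr rfl fun m _ => by rw [← mul_add, ← mul_add, hm m]
    have hEE : E i + E j = E k + E l := by
      simp only [hEdef]
      linear_combination (-1 : ℝ) * hb + (-c) * he
    have hexp : Real.exp (E i) * Real.exp (E j) = Real.exp (E k) * Real.exp (E l) := by
      rw [← Real.exp_add, ← Real.exp_add, hEE]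
    linear_combination (P j * Psi α (P k) * Psi α (P l)) * hPform i
      + (K * Real.exp (E i) * Psi α (P i) * Psi α (P k) * Psi α (P l)) * hPform j
      - (P l * Psi α (P i) * Psi α (P j)) * hPform k
      - (K * Real.exp (E k) * Psi α (P k) * Psi α (P i) * Psi α (P j)) * hPform l
      + (K * K * Psi α (P i) * Psi α (P j) * Psi α (P k) * Psi α (P l)) * hexp
  -- the symmetric nonnegative kernel
  set W : Fin N → Fin N → Fin N → Fin N → ℝ :=
    fun i j k l => Γ i j k l * (P i * P j * Psi α (P k) * Psi α (P l)) with hW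
  have hW0 : ∀ i j k l, 0 ≤ W i j k l := by
    intro i j k l
    have : 0 < P i * P j * Psi α (P k) * Psi α (P l) :=
      mul_pos (mul_pos (mul_pos (hPpos i).1 (hPpos j).1) (hψ k)) (hψ l)
    exact mul_nonneg (hΓ0 i j k l) this.le
  have hW1 : ∀ i j k l, W i j k l = W j i k l := by
    intro i j k l
    simp only [hW]
    rw [hΓs1 i j k l]; ring
  have hW2 : ∀ i j k l, W i j k l = W k l i j := by
    intro i j k l
    rcases eq_or_ne (Γ i j k l) 0 with h | h
    · have h2' : Γ k l i j = 0 := by rw [← hΓs2]; exact h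
      simp [hW, h, h2']
    · simp only [hW]
      rw [← hΓs2 i j k l, hbal i j k l h]
  -- pointwise identity for the quadratic form
  have hterm : ∀ (f g : Fin N → ℝ) i j k l,
      g i * (Γ i j k l / Real.sqrt (Rfun α P i) *
        (Pcoef α P i j k l * f i + Pcoef α P j i k l * f j
          - Pcoef α P k l i j * f k - Pcoef α P l k i j * f l))
      = W i j k l * (g i / Real.sqrt (Rfun α P i)) *
          (f i / Real.sqrt (Rfun α P i) + f j / Real.sqrt (Rfun α P j)
            - f k / Real.sqrt (Rfun α P k) - f l / Real.sqrt (Rfun α P l)) := by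
    intro f g i j k l
    rcases eq_or_ne (Γ i j k l) 0 with h | h
    · simp [hW, h]
    · have hb := hbal i j k l h
      have e1 : Pcoef α P i j k l
          = (P i * P j * Psi α (P k) * Psi α (P l)) / Real.sqrt (Rfun α P i) := rfl
      have e2 : Pcoef α P j i k l
          = (P i * P j * Psi α (P k) * Psi α (P l)) / Real.sqrt (Rfun α P j) := by
        unfold Pcoef
        rw [show P j * P i * Psi α (P k) * Psi α (P l)
          = P i * P j * Psi α (P k) * Psi α (P l) from by ring]
      have e3 : Pcoef α P k l i j
          = (P i * P j * Psi α (P k) * Psi α (P l)) / Real.sqrt (Rfun α P k) := by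
        unfold Pcoef
        rw [← hb]
      have e4 : Pcoef α P l k i j
          = (P i * P j * Psi α (P k) * Psi α (P l)) / Real.sqrt (Rfun α P l) := by
        unfold Pcoef
        rw [show P l * P k * Psi α (P i) * Psi α (P j)
          = P k * P l * Psi α (P i) * Psi α (P j) from by ring, ← hb]
      rw [e1, e2, e3, e4]
      simp only [hW]
      exact alg1 _ _ _ _ _ _ _ _ _ _ _ (hs i) (hs j) (hs k) (hs l)
  -- quadratic form as quadruple sum
  have hdot : ∀ f g : Fin N → ℝ, dotN g (Lop α Γ P f)
      = ∑ i, ∑ j, ∑ k, ∑ l, W i j k l * (g i / Real.sqrt (Rfun α P i)) *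
          (f i / Real.sqrt (Rfun α P i) + f j / Real.sqrt (Rfun α P j)
            - f k / Real.sqrt (Rfun α P k) - f l / Real.sqrt (Rfun α P l)) := by
    intro f g
    unfold dotN Lop
    simp only [Finset.mul_sum]
    exact Finset.sum_congr rfl fun i _ => Finset.sum_congr rfl fun j _ =>
      Finset.sum_congr rfl fun k _ => Finset.sum_congr rfl fun l _ => hterm f g i j k l
  -- pass to single sum over quadruples
  set Ef : (Fin N → ℝ) → ((Fin N × Fin N) × (Fin N × Fin N)) → ℝ :=
    fun f x => f x.1.1 / Real.sqrt (Rfun α P x.1.1) + f x.1.2 / Real.sqrt (Rfun α P x.1.2)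
      - f x.2.1 / Real.sqrt (Rfun α P x.2.1) - f x.2.2 / Real.sqrt (Rfun α P x.2.2) with hEf
  have hquad : ∀ f g : Fin N → ℝ, dotN g (Lop α Γ P f)
      = (1/4) * ∑ x : (Fin N × Fin N) × (Fin N × Fin N),
          W x.1.1 x.1.2 x.2.1 x.2.2 * Ef g x * Ef f x := by
    intro f g
    rw [hdot f g, collapse4]
    have fold : (∑ x : (Fin N × Fin N) × (Fin N × Fin N),
          W x.1.1 x.1.2 x.2.1 x.2.2 * (g x.1.1 / Real.sqrt (Rfun α P x.1.1)) *
            (f x.1.1 / Real.sqrt (Rfun α P x.1.1) + f x.1.2 / Real.sqrt (Rfun α P x.1.2)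
              - f x.2.1 / Real.sqrt (Rfun α P x.2.1) - f x.2.2 / Real.sqrt (Rfun α P x.2.2)))
        = ∑ x : (Fin N × Fin N) × (Fin N × Fin N),
            W x.1.1 x.1.2 x.2.1 x.2.2 * (g x.1.1 / Real.sqrt (Rfun α P x.1.1)) * Ef f x :=
      Finset.sum_congr rfl fun x _ => by rw [hEf]
    rw [fold]
    have A1 : (∑ x : (Fin N × Fin N) × (Fin N × Fin N), W x.1.1 x.1.2 x.2.1 x.2.2
          * (g x.1.2 / Real.sqrt (Rfun α P x.1.2)) * Ef f x)
        = ∑ x : (Fin N × Fin N) × (Fin N × Fin N), W x.1.1 x.1.2 x.2.1 x.2.2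
          * (g x.1.1 / Real.sqrt (Rfun α P x.1.1)) * Ef f x := by
      refine Fintype.sum_equiv
        ⟨fun x => ((x.1.2, x.1.1), x.2), fun x => ((x.1.2, x.1.1), x.2),
          fun x => rfl, fun x => rfl⟩ _ _ fun x => ?_
      simp only [Equiv.coe_fn_mk, hEf]
      rw [hW1 x.1.2 x.1.1 x.2.1 x.2.2]
      ring
    have A2 : (∑ x : (Fin N × Fin N) × (Fin N × Fin N), W x.1.1 x.1.2 x.2.1 x.2.2
          * (g x.2.1 / Real.sqrt (Rfun α P x.2.1)) * -(Ef f x))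
        = ∑ x : (Fin N × Fin N) × (Fin N × Fin N), W x.1.1 x.1.2 x.2.1 x.2.2
          * (g x.1.1 / Real.sqrt (Rfun α P x.1.1)) * Ef f x := by
      refine Fintype.sum_equiv
        ⟨fun x => (x.2, x.1), fun x => (x.2, x.1), fun x => rfl, fun x => rfl⟩ _ _ fun x => ?_
      simp only [Equiv.coe_fn_mk, hEf]
      rw [hW2 x.2.1 x.2.2 x.1.1 x.1.2]
      ring
    have A3 : (∑ x : (Fin N × Fin N) × (Fin N × Fin N), W x.1.1 x.1.2 x.2.1 x.2.2
          * (g x.2.2 / Real.sqrt (Rfun α P x.2.2)) * -(Ef f x))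
        = ∑ x : (Fin N × Fin N) × (Fin N × Fin N), W x.1.1 x.1.2 x.2.1 x.2.2
          * (g x.1.1 / Real.sqrt (Rfun α P x.1.1)) * Ef f x := by
      refine Fintype.sum_equiv
        ⟨fun x => ((x.2.2, x.2.1), x.1), fun x => (x.2, (x.1.2, x.1.1)),
          fun x => rfl, fun x => rfl⟩ _ _ fun x => ?_
      simp only [Equiv.coe_fn_mk, hEf]
      rw [hW1 x.2.2 x.2.1 x.1.1 x.1.2, hW2 x.2.1 x.2.2 x.1.1 x.1.2]
      ring
    have split : (∑ x : (Fin N × Fin N) × (Fin N × Fin N),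
          W x.1.1 x.1.2 x.2.1 x.2.2 * Ef g x * Ef f x)
        = (∑ x : (Fin N × Fin N) × (Fin N × Fin N), W x.1.1 x.1.2 x.2.1 x.2.2
            * (g x.1.1 / Real.sqrt (Rfun α P x.1.1)) * Ef f x)
          + ((∑ x : (Fin N × Fin N) × (Fin N × Fin N), W x.1.1 x.1.2 x.2.1 x.2.2
            * (g x.1.2 / Real.sqrt (Rfun α P x.1.2)) * Ef f x)
          + ((∑ x : (Fin N × Fin N) × (Fin N × Fin N), W x.1.1 x.1.2 x.2.1 x.2.2
            * (g x.2.1 / Real.sqrt (Rfun α P x.2.1)) * -(Ef f x))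
          + (∑ x : (Fin N × Fin N) × (Fin N × Fin N), W x.1.1 x.1.2 x.2.1 x.2.2
            * (g x.2.2 / Real.sqrt (Rfun α P x.2.2)) * -(Ef f x)))) := by
      rw [← Finset.sum_add_distrib, ← Finset.sum_add_distrib, ← Finset.sum_add_distrib]
      refine Finset.sum_congr rfl fun x _ => ?_
      simp only [hEf]
      ring
    rw [split, A1, A2, A3]
    ring
  intro f g
  constructor
  · rw [hquad f g]
    have h' : dotN (Lop α Γ P g) f = dotN f (Lop α Γ P g) := by
      unfold dotN
      exact Finset.sum_congr rfl fun i _ => mul_comm _ _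
    rw [h', hquad g f]
    congr 1
    exact Finset.sum_congr rfl fun x _ => by ring
  · rw [hquad f f]
    have hnn : (0:ℝ) ≤ ∑ x : (Fin N × Fin N) × (Fin N × Fin N),
        W x.1.1 x.1.2 x.2.1 x.2.2 * Ef f x * Ef f x := by
      refine Finset.sum_nonneg fun x _ => ?_
      rw [mul_assoc]
      exact mul_nonneg (hW0 _ _ _ _) (mul_self_nonneg _)
    linarith
end
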